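/- arXiv:2103.15799 — 5 statements merged into one kernel-verified Lean document; each statement's English description precedes it below -/
import Mathlib

section
/- Let T be a complete first-order theory and let (āᵢ, b̄ᵢ : i ∈ ℚ) be a family of tuples in a model M of T which is L*-indiscernible when indexed by the random ordered bipartite graph G*. Then either the two sequences (āᵢ : i ∈ ℚ) and (b̄ᵢ : i ∈ ℚ) are mutually indiscernible, or there is a formula φ(x̄;ȳ) with |x̄| = |āᵢ|, |ȳ| = |b̄ᵢ|, and parameters from {āᵢ, b̄ᵢ : i ∈ ℚ}, which has the independence property. -/
open FirstOrder FirstOrder.Language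

universe u v

/-- An elementary extension of `M`: a structure together with an elementary embedding of `M`
into it. -/
structure ElemExt (L : FirstOrder.Language.{u, v}) (M : Type (max u v)) [L.Structure M] where
  carrier : Type (max u v)
  [str : L.Structure carrier]
  emb : M ↪ₑ[L] carrier

attribute [instance] ElemExt.str

/-- A formula `φ(x̄; ȳ)` (without parameters) has the order property with respect to a theory
`T` if in some model of `T` there are sequences `(āᵢ : i < ω)` and `(b̄ⱼ : j < ω)` such that
`φ(āᵢ; b̄ⱼ)` holds iff `i < j`. -/
def FormulaHasOP {L : FirstOrder.Language.{u, v}} (T : L.Theory) {α β : Type*}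
    (φ : L.Formula (α ⊕ β)) : Prop :=
  ∃ (N : FirstOrder.Language.Theory.ModelType.{u, v, max u v} T)
    (a : ℕ → α → N) (b : ℕ → β → N),
    ∀ i j : ℕ, φ.Realize (Sum.elim (a i) (b j)) ↔ i < j

/-- A formula `φ(x̄; ȳ)` (without parameters) has the independence property with respect to a
theory `T` if in some model of `T` there are tuples `(āᵢ : i < ω)` and `(b̄_S : S ⊆ ω)` such
that `φ(āᵢ; b̄_S)` holds iff `i ∈ S`. -/
def FormulaHasIP {L : FirstOrder.Language.{u, v}} (T : L.Theory) {α β : Type*}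
    (φ : L.Formula (α ⊕ β)) : Prop :=
  ∃ (N : FirstOrder.Language.Theory.ModelType.{u, v, max u v} T)
    (a : ℕ → α → N) (b : Set ℕ → β → N),
    ∀ (i : ℕ) (S : Set ℕ), φ.Realize (Sum.elim (a i) (b S)) ↔ i ∈ S

/-- A formula `φ(x̄; ȳ)` with parameters `c` from `M` has the order property if in some
elementary extension of `M` there are sequences `(āᵢ : i < ω)` and `(b̄ⱼ : j < ω)` such that
`φ(āᵢ; b̄ⱼ; c)` holds iff `i < j`. -/
def HasOPWithParams {L : FirstOrder.Language.{u, v}} {M : Type (max u v)} [L.Structure M]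
    {α β γ : Type*} (φ : L.Formula ((α ⊕ β) ⊕ γ)) (c : γ → M) : Prop :=
  ∃ (N : ElemExt L M) (a : ℕ → α → N.carrier) (b : ℕ → β → N.carrier),
    ∀ i j : ℕ, φ.Realize (Sum.elim (Sum.elim (a i) (b j)) (N.emb ∘ c)) ↔ i < j

/-- A formula `φ(x̄; ȳ)` with parameters `c` from `M` has the independence property if in some
elementary extension of `M` there are tuples `(āᵢ : i < ω)` and `(b̄_S : S ⊆ ω)` such that
`φ(āᵢ; b̄_S; c)` holds iff `i ∈ S`. -/
def HasIPWithParams {L : FirstOrder.Language.{u, v}} {M : Type (max u v)} [L.Structure M]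
    {α β γ : Type*} (φ : L.Formula ((α ⊕ β) ⊕ γ)) (c : γ → M) : Prop :=
  ∃ (N : ElemExt L M) (a : ℕ → α → N.carrier) (b : Set ℕ → β → N.carrier),
    ∀ (i : ℕ) (S : Set ℕ), φ.Realize (Sum.elim (Sum.elim (a i) (b S)) (N.emb ∘ c)) ↔ i ∈ S

/-- The family of tuples `(c̄ᵢ : i ∈ ι)` is an indiscernible sequence over the set `A`:
any two strictly increasing tuples of indices realize the same formulas with parameters
from `A`. -/
def IsIndiscernibleOver {L : FirstOrder.Language.{u, v}} {M : Type (max u v)} [L.Structure M]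
    {ι : Type*} [LinearOrder ι] {γ : Type*} (c : ι → γ → M) (A : Set M) : Prop :=
  ∀ (n m : ℕ) (i j : Fin n → ι), StrictMono i → StrictMono j →
    ∀ p : Fin m → M, (∀ l, p l ∈ A) →
      ∀ φ : L.Formula (Fin n × γ ⊕ Fin m),
        φ.Realize (Sum.elim (fun v : Fin n × γ => c (i v.1) v.2) p) ↔
          φ.Realize (Sum.elim (fun v : Fin n × γ => c (j v.1) v.2) p)

/-- The family of tuples `(c̄ᵢ : i ∈ ι)` is an indiscernible sequence. -/
def IsIndiscernible {L : FirstOrder.Language.{u, v}} {M : Type (max u v)} [L.Structure M]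
    {ι : Type*} [LinearOrder ι] {γ : Type*} (c : ι → γ → M) : Prop :=
  IsIndiscernibleOver (L := L) c ∅

/-- Two families of tuples are mutually indiscernible if each is indiscernible over the union
of the tuples of the other. -/
def MutuallyIndiscernible {L : FirstOrder.Language.{u, v}} {M : Type (max u v)} [L.Structure M]
    {ι : Type*} [LinearOrder ι] {γ δ : Type*} (a : ι → γ → M) (b : ι → δ → M) : Prop :=
  IsIndiscernibleOver (L := L) a (⋃ i, Set.range (b i)) ∧
    IsIndiscernibleOver (L := L) b (⋃ i, Set.range (a i))

/-- The family of tuples `(c̄ᵢ : i ∈ ι)` is totally indiscernible: any two tuples of distinct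
indices (in any order) realize the same formulas. -/
def IsTotallyIndiscernible {L : FirstOrder.Language.{u, v}} {M : Type (max u v)} [L.Structure M]
    {ι : Type*} [LinearOrder ι] {γ : Type*} (c : ι → γ → M) : Prop :=
  ∀ (n : ℕ) (i j : Fin n → ι), Function.Injective i → Function.Injective j →
    ∀ φ : L.Formula (Fin n × γ),
      φ.Realize (fun v : Fin n × γ => c (i v.1) v.2) ↔
        φ.Realize (fun v : Fin n × γ => c (j v.1) v.2)

/-- A set in a linear order is dense (in the order) and unbounded above and below. -/
def DenseUnbounded {α : Type*} [LinearOrder α] (S : Set α) : Prop :=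
  (∀ x y : α, x < y → ∃ z ∈ S, x < z ∧ z < y) ∧ (∀ x : α, ∃ z ∈ S, z < x) ∧
    (∀ x : α, ∃ z ∈ S, x < z)

/-- `R : α → β → Prop` presents (a structure isomorphic to) the random ordered bipartite
graph `G*`, i.e. the Fraïssé limit of finite ordered bipartite graphs: both parts are
countable nonempty dense linear orders without endpoints and the edge relation is generic. -/
def IsRandomOBG {α β : Type*} [LinearOrder α] [LinearOrder β] (R : α → β → Prop) : Prop :=
  Countable α ∧ Countable β ∧ Nonempty α ∧ Nonempty β ∧
    (∀ F G : Finset β, Disjoint F G →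
      DenseUnbounded {x : α | (∀ f ∈ F, R x f) ∧ ∀ g ∈ G, ¬R x g}) ∧
    (∀ F G : Finset α, Disjoint F G →
      DenseUnbounded {y : β | (∀ f ∈ F, R f y) ∧ ∀ g ∈ G, ¬R g y})

/-- An element of the random ordered bipartite graph `G*`, whose two parts `U(G*)` and
`V(G*)` are both identified with `ℚ`: `Sum.inl` is the `U`-part, `Sum.inr` the `V`-part. -/
abbrev GStarIdx : Type := ℚ ⊕ ℚ

/-- The index of the pair `(s, q)`: in the `U`-part if `s = true`, in the `V`-part
otherwise. -/
def mkIdx {n : ℕ} (s : Fin n → Bool) (q : Fin n → ℚ) : Fin n → GStarIdx := fun k =>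
  bif s k then Sum.inl (q k) else Sum.inr (q k)

/-- Two pairs of elements of `G*` (with edge relation `R`) have the same quantifier-free
`L*`-type, where `L* = {U, ≤_U, V, ≤_V, R}`. -/
def SamePairType (R : ℚ → ℚ → Prop) :
    GStarIdx → GStarIdx → GStarIdx → GStarIdx → Prop
  | Sum.inl p, Sum.inl q, Sum.inl p', Sum.inl q' => (p ≤ q ↔ p' ≤ q') ∧ (q ≤ p ↔ q' ≤ p')
  | Sum.inr p, Sum.inr q, Sum.inr p', Sum.inr q' => (p ≤ q ↔ p' ≤ q') ∧ (q ≤ p ↔ q' ≤ p')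
  | Sum.inl p, Sum.inr q, Sum.inl p', Sum.inr q' => R p q ↔ R p' q'
  | Sum.inr q, Sum.inl p, Sum.inr q', Sum.inl p' => R p q ↔ R p' q'
  | _, _, _, _ => False

/-- Two tuples of elements of `G*` (with edge relation `R`) have the same quantifier-free
`L*`-type. -/
def SameQfType (R : ℚ → ℚ → Prop) {n : ℕ} (i j : Fin n → GStarIdx) : Prop :=
  ∀ k l : Fin n, SamePairType R (i k) (i l) (j k) (j l)

/-- The variables carried by a coordinate of a mixed tuple: a `U`-index carries an `x̄`-tuple
of length `da`, a `V`-index a `ȳ`-tuple of length `db`. -/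
def MixVar (da db : ℕ) : Bool → Type
  | true => Fin da
  | false => Fin db

/-- Choose the `a`-tuple or the `b`-tuple according to the side. -/
def pickSide {M : Type*} {da db : ℕ} (a : Fin da → M) (b : Fin db → M) :
    (s : Bool) → MixVar da db s → M
  | true, w => a w
  | false, w => b w

/-- The family `(āᵢ : i ∈ U(G*) ≅ ℚ) ∪ (b̄ⱼ : j ∈ V(G*) ≅ ℚ)`, indexed by the random ordered
bipartite graph `G*` with edge relation `R`, is `L*`-indiscernible: index tuples with the same
quantifier-free `L*`-type in `G*` realize the same `L`-formulas in `M`. -/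
def IsLStarIndiscernible {L : FirstOrder.Language.{u, v}} {M : Type (max u v)} [L.Structure M]
    (R : ℚ → ℚ → Prop) {da db : ℕ} (a : ℚ → Fin da → M) (b : ℚ → Fin db → M) : Prop :=
  ∀ (n : ℕ) (s : Fin n → Bool) (q q' : Fin n → ℚ),
    SameQfType R (mkIdx s q) (mkIdx s q') →
      ∀ φ : L.Formula ((k : Fin n) × MixVar da db (s k)),
        φ.Realize (fun v => pickSide (a (q v.1)) (b (q v.1)) (s v.1) v.2) ↔
          φ.Realize (fun v => pickSide (a (q' v.1)) (b (q' v.1)) (s v.1) v.2)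

private lemma DU.exists_in_cut {S : Set ℚ} (hS : DenseUnbounded S) (B : Finset ℚ) (t : ℚ) :
    ∃ z ∈ S, t < z ∧ ∀ y ∈ B, (y ≤ t → y < z) ∧ (t < y → z < y) := by
  classical
  by_cases hB : (B.filter (fun y => t < y)).Nonempty
  · set m := (B.filter (fun y => t < y)).min' hB with hm
    have hm_mem := (B.filter (fun y => t < y)).min'_mem hB
    have htm : t < m := (Finset.mem_filter.mp hm_mem).2
    obtain ⟨z, hzS, hz1, hz2⟩ := hS.1 t m htm
    refine ⟨z, hzS, hz1, fun y hy => ⟨fun h => lt_of_le_of_lt h hz1, fun h => ?_⟩⟩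
    exact lt_of_lt_of_le hz2 (Finset.min'_le _ _ (Finset.mem_filter.mpr ⟨hy, h⟩))
  · obtain ⟨z, hzS, hz⟩ := hS.2.2 t
    refine ⟨z, hzS, hz, fun y hy => ⟨fun h => lt_of_le_of_lt h hz, fun h => absurd ?_ hB⟩⟩
    exact ⟨y, Finset.mem_filter.mpr ⟨hy, h⟩⟩

private lemma DU.exists_seq {S : Set ℚ} (hS : DenseUnbounded S) (B : Finset ℚ) (t : ℚ) :
    ∃ u : ℕ → ℚ, StrictMono u ∧ (∀ i, u i ∈ S) ∧ (∀ i, t < u i) ∧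
      ∀ i, ∀ y ∈ B, t < y → u i < y := by
  have h := fun c => DU.exists_in_cut hS B c
  choose g hgS hgt hgB using h
  let u : ℕ → ℚ := fun i => Nat.rec (g t) (fun _ p => g p) i
  have hsucc : ∀ i, u (i + 1) = g (u i) := fun i => rfl
  have h0 : u 0 = g t := rfl
  have hmem : ∀ i, u i ∈ S := by
    intro i; cases i with
    | zero => exact hgS t
    | succ i => rw [hsucc]; exact hgS _
  have hlt : ∀ i, t < u i := by
    intro i; induction i with
    | zero => exact hgt t
    | succ i ih => rw [hsucc]; exact ih.trans (hgt _)
  refine ⟨u, strictMono_nat_of_lt_succ (fun i => by rw [hsucc]; exact hgt _), hmem, hlt, ?_⟩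
  intro i y hy hty
  induction i with
  | zero => exact ((hgB t y hy).2 hty)
  | succ i ih => rw [hsucc]; exact (hgB (u i) y hy).2 ih

private lemma exists_strictMono_edges (R : ℚ → ℚ → Prop)
    (hgen : ∀ F G : Finset ℚ, Disjoint F G →
      DenseUnbounded {y : ℚ | (∀ f ∈ F, R f y) ∧ ∀ g ∈ G, ¬R g y})
    (D : Finset ℚ) :
    ∀ (m : ℕ) (spec : Fin m → ℚ → Prop),
      ∃ z : Fin m → ℚ, StrictMono z ∧ ∀ t, ∀ y ∈ D, (R y (z t) ↔ spec t y) := by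
  intro m
  induction m with
  | zero =>
    exact fun spec => ⟨fun t => t.elim0, fun t => t.elim0, fun t => t.elim0⟩
  | succ m ih =>
    intro spec
    obtain ⟨z0, hz0m, hz0⟩ := ih (fun t => spec t.castSucc)
    classical
    set F := D.filter (fun y => spec (Fin.last m) y) with hF
    set G := D.filter (fun y => ¬spec (Fin.last m) y) with hG
    have hdisj : Disjoint F G := by
      rw [hF, hG]
      exact Finset.disjoint_filter_filter_not D D _
    obtain ⟨bb, hbb⟩ := (Finset.image z0 Finset.univ).exists_le
    obtain ⟨w, hwS, hw⟩ := (hgen F G hdisj).2.2 bb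
    have hzw : ∀ t, z0 t < w := fun t =>
      lt_of_le_of_lt (hbb _ (Finset.mem_image_of_mem z0 (Finset.mem_univ t))) hw
    refine ⟨Fin.snoc z0 w, ?_, ?_⟩
    · intro i j hij
      rcases Fin.eq_castSucc_or_eq_last j with ⟨j', rfl⟩ | rfl
      · have hi : i < Fin.last m := lt_of_lt_of_le hij (Fin.le_last _)
        obtain ⟨i', rfl⟩ : ∃ i', i = Fin.castSucc i' :=
          ⟨i.castPred (Fin.ne_last_of_lt hij), by simp⟩
        rw [Fin.snoc_castSucc, Fin.snoc_castSucc]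
        exact hz0m (by exact_mod_cast hij)
      · obtain ⟨i', rfl⟩ : ∃ i', i = Fin.castSucc i' :=
          ⟨i.castPred (Fin.ne_last_of_lt hij), by simp⟩
        rw [Fin.snoc_castSucc, Fin.snoc_last]
        exact hzw i'
    · intro t y hy
      rcases Fin.eq_castSucc_or_eq_last t with ⟨t', rfl⟩ | rfl
      · rw [Fin.snoc_castSucc]; exact hz0 t' y hy
      · rw [Fin.snoc_last]
        by_cases hsp : spec (Fin.last m) y
        · simp only [hsp, iff_true]
          exact hwS.1 y (Finset.mem_filter.mpr ⟨hy, hsp⟩)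
        · simp only [hsp, iff_false]
          exact hwS.2 y (Finset.mem_filter.mpr ⟨hy, hsp⟩)

-- compat lemmas, to be appended after defs
section CompatLemmas

private lemma exists_compat (R : ℚ → ℚ → Prop) (hR : IsRandomOBG R) {n : ℕ}
    (s : Fin n → Bool) (q : Fin n → ℚ) (e : ℚ → ℚ → Prop) :
    ∃ qb : Fin n → ℚ, (∀ k, s k = true → qb k = q k) ∧
      (∀ k l, s k = s l → (qb k ≤ qb l ↔ q k ≤ q l)) ∧
      (∀ k l, s k = true → s l = false → (R (qb k) (qb l) ↔ e (q k) (q l))) := by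
  classical
  set Vvals := (Finset.univ.filter (fun l => s l = false)).image q with hV
  set Uvals := (Finset.univ.filter (fun k => s k = true)).image q with hU
  obtain ⟨z, hzm, hz⟩ := exists_strictMono_edges R hR.2.2.2.2.2 Uvals Vvals.card
    (fun t y => e y ((Vvals.orderIsoOfFin rfl t : Vvals) : ℚ))
  set iso := Vvals.orderIsoOfFin (rfl : Vvals.card = Vvals.card) with hiso
  have hmem : ∀ k, ¬ s k = true → q k ∈ Vvals := by
    intro k hk
    exact Finset.mem_image_of_mem q (Finset.mem_filter.mpr
      ⟨Finset.mem_univ _, by simpa using hk⟩)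
  refine ⟨fun k => if h : s k = true then q k else z (iso.symm ⟨q k, hmem k h⟩), ?_, ?_, ?_⟩
  · intro k hk; dsimp only; rw [dif_pos hk]
  · intro k l hkl
    dsimp only
    by_cases hk : s k = true
    · rw [dif_pos hk, dif_pos (hkl ▸ hk)]
    · rw [dif_neg hk, dif_neg (fun h => hk (hkl ▸ h)), hzm.le_iff_le,
        (iso.symm).le_iff_le, Subtype.mk_le_mk]
  · intro k l hk hl
    dsimp only
    rw [dif_pos hk, dif_neg (by simp [hl]),
      hz _ (q k) (Finset.mem_image_of_mem q (Finset.mem_filter.mpr ⟨Finset.mem_univ _, hk⟩))]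
    rw [hiso, OrderIso.apply_symm_apply]

private lemma sameQfType_of_compat (R : ℚ → ℚ → Prop) {n : ℕ} (s : Fin n → Bool)
    (q : Fin n → ℚ) (e : ℚ → ℚ → Prop) (q1 q2 : Fin n → ℚ)
    (h1o : ∀ k l, s k = s l → (q1 k ≤ q1 l ↔ q k ≤ q l))
    (h1e : ∀ k l, s k = true → s l = false → (R (q1 k) (q1 l) ↔ e (q k) (q l)))
    (h2o : ∀ k l, s k = s l → (q2 k ≤ q2 l ↔ q k ≤ q l))
    (h2e : ∀ k l, s k = true → s l = false → (R (q2 k) (q2 l) ↔ e (q k) (q l))) :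
    SameQfType R (mkIdx s q1) (mkIdx s q2) := by
  intro k l
  unfold mkIdx
  cases hk : s k <;> cases hl : s l <;>
    simp only [cond_true, cond_false]
  · exact ⟨(h1o k l (hk.trans hl.symm)).trans (h2o k l (hk.trans hl.symm)).symm,
      (h1o l k (hl.trans hk.symm)).trans (h2o l k (hl.trans hk.symm)).symm⟩
  · exact (h1e l k hl hk).trans (h2e l k hl hk).symm
  · exact (h1e k l hk hl).trans (h2e k l hk hl).symm
  · exact ⟨(h1o k l (hk.trans hl.symm)).trans (h2o k l (hk.trans hl.symm)).symm,
      (h1o l k (hl.trans hk.symm)).trans (h2o l k (hl.trans hk.symm)).symm⟩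

end CompatLemmas

section Step1

private lemma mix_eq_true {da db : ℕ} {t : Bool} (h : t = true) :
    Fin da = MixVar da db t := by rw [h]; rfl

private lemma mix_eq_false {da db : ℕ} {t : Bool} (h : t = false) :
    Fin db = MixVar da db t := by rw [h]; rfl

private lemma pickSide_cast_true {P : Type*} {da db : ℕ} (f1 : Fin da → P) (f2 : Fin db → P)
    {t : Bool} (h : t = true) (hc : Fin da = MixVar da db t) (w : Fin da) :
    pickSide f1 f2 t (cast hc w) = f1 w := by
  subst h
  exact congrArg f1 (eq_of_heq (cast_heq hc w))

private lemma pickSide_cast_false {P : Type*} {da db : ℕ} (f1 : Fin da → P) (f2 : Fin db → P)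
    {t : Bool} (h : t = false) (hc : Fin db = MixVar da db t) (w : Fin db) :
    pickSide f1 f2 t (cast hc w) = f2 w := by
  subst h
  exact congrArg f2 (eq_of_heq (cast_heq hc w))

private def sTwo (c1 c2 : Bool) {n m : ℕ} : Fin (n + m) → Bool :=
  fun k => Sum.elim (fun _ => c1) (fun _ => c2) (finSumFinEquiv.symm k)

private lemma sTwo_inl (c1 c2 : Bool) {n m : ℕ} (k : Fin n) :
    sTwo c1 c2 (finSumFinEquiv (Sum.inl k) : Fin (n + m)) = c1 := by
  simp [sTwo]

private lemma sTwo_inr (c1 c2 : Bool) {n m : ℕ} (l : Fin m) :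
    sTwo c1 c2 (finSumFinEquiv (Sum.inr l) : Fin (n + m)) = c2 := by
  simp [sTwo]

private def qTwo {n m : ℕ} (i : Fin n → ℚ) (r : Fin m → ℚ) : Fin (n + m) → ℚ :=
  fun k => Sum.elim i r (finSumFinEquiv.symm k)

private lemma qTwo_inl {n m : ℕ} (i : Fin n → ℚ) (r : Fin m → ℚ) (k : Fin n) :
    qTwo i r (finSumFinEquiv (Sum.inl k)) = i k := by simp [qTwo]

private lemma qTwo_inr {n m : ℕ} (i : Fin n → ℚ) (r : Fin m → ℚ) (l : Fin m) :
    qTwo i r (finSumFinEquiv (Sum.inr l)) = r l := by simp [qTwo]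

variable {L : FirstOrder.Language.{u, v}} {M : Type (max u v)} [L.Structure M]

private lemma fail_of_not_mutually {da db : ℕ} (a : ℚ → Fin da → M) (b : ℚ → Fin db → M)
    (h : ¬ MutuallyIndiscernible (L := L) a b) :
    ∃ (n : ℕ) (s : Fin n → Bool) (q q' : Fin n → ℚ)
      (ψ : L.Formula ((k : Fin n) × MixVar da db (s k))),
      (∀ k l, s k = s l → (q k ≤ q l ↔ q' k ≤ q' l)) ∧
      ¬ (ψ.Realize (fun v => pickSide (a (q v.1)) (b (q v.1)) (s v.1) v.2) ↔
         ψ.Realize (fun v => pickSide (a (q' v.1)) (b (q' v.1)) (s v.1) v.2)) := by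
  rw [MutuallyIndiscernible, not_and_or] at h
  rcases h with h | h
  · rw [IsIndiscernibleOver] at h
    push_neg at h
    obtain ⟨n, m, i, j, hi, hj, p, hp, φ, hφ⟩ := h
    have hpl : ∀ l, ∃ rl wl, b rl wl = p l := by
      intro l
      obtain ⟨ri, hri⟩ := Set.mem_iUnion.mp (hp l)
      obtain ⟨wl, hwl⟩ := hri
      exact ⟨ri, wl, hwl⟩
    choose r w hrw using hpl
    refine ⟨n + m, sTwo true false, qTwo i r, qTwo j r,
      φ.relabel (Sum.elim
        (fun kw : Fin n × Fin da =>
          ⟨finSumFinEquiv (Sum.inl kw.1), cast (mix_eq_true (sTwo_inl true false kw.1)) kw.2⟩)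
        (fun l : Fin m =>
          ⟨finSumFinEquiv (Sum.inr l), cast (mix_eq_false (sTwo_inr true false l)) (w l)⟩)),
      ?_, ?_⟩
    · intro k l hkl
      obtain ⟨k', rfl⟩ := finSumFinEquiv.surjective k
      obtain ⟨l', rfl⟩ := finSumFinEquiv.surjective l
      cases k' with
      | inl k' =>
        cases l' with
        | inl l' =>
          rw [qTwo_inl, qTwo_inl, qTwo_inl, qTwo_inl, hi.le_iff_le, hj.le_iff_le]
        | inr l' =>
          rw [sTwo_inl, sTwo_inr] at hkl
          exact absurd hkl (by simp)
      | inr k' =>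
        cases l' with
        | inl l' =>
          rw [sTwo_inr, sTwo_inl] at hkl
          exact absurd hkl (by simp)
        | inr l' => rw [qTwo_inr, qTwo_inr, qTwo_inr, qTwo_inr]
    · have hval : ∀ ii : Fin n → ℚ,
        ((fun v : (k : Fin (n + m)) × MixVar da db (sTwo true false k) =>
            pickSide (a (qTwo ii r v.1)) (b (qTwo ii r v.1)) (sTwo true false v.1) v.2) ∘
          (Sum.elim
            (fun kw : Fin n × Fin da =>
              ⟨finSumFinEquiv (Sum.inl kw.1), cast (mix_eq_true (sTwo_inl true false kw.1)) kw.2⟩)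
            (fun l : Fin m =>
              ⟨finSumFinEquiv (Sum.inr l), cast (mix_eq_false (sTwo_inr true false l)) (w l)⟩)))
          = Sum.elim (fun v : Fin n × Fin da => a (ii v.1) v.2) p := by
        intro ii
        funext x
        cases x with
        | inl kw =>
          simp only [Function.comp_apply, Sum.elim_inl]
          rw [pickSide_cast_true _ _ (sTwo_inl true false kw.1) _ kw.2, qTwo_inl]
        | inr l =>
          simp only [Function.comp_apply, Sum.elim_inr]
          rw [pickSide_cast_false _ _ (sTwo_inr true false l) _ (w l), qTwo_inr, hrw]
      rw [Formula.realize_relabel, Formula.realize_relabel, hval i, hval j]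
      tauto
  · rw [IsIndiscernibleOver] at h
    push_neg at h
    obtain ⟨n, m, i, j, hi, hj, p, hp, φ, hφ⟩ := h
    have hpl : ∀ l, ∃ rl wl, a rl wl = p l := by
      intro l
      obtain ⟨ri, hri⟩ := Set.mem_iUnion.mp (hp l)
      obtain ⟨wl, hwl⟩ := hri
      exact ⟨ri, wl, hwl⟩
    choose r w hrw using hpl
    refine ⟨n + m, sTwo false true, qTwo i r, qTwo j r,
      φ.relabel (Sum.elim
        (fun kw : Fin n × Fin db =>
          ⟨finSumFinEquiv (Sum.inl kw.1), cast (mix_eq_false (sTwo_inl false true kw.1)) kw.2⟩)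
        (fun l : Fin m =>
          ⟨finSumFinEquiv (Sum.inr l), cast (mix_eq_true (sTwo_inr false true l)) (w l)⟩)),
      ?_, ?_⟩
    · intro k l hkl
      obtain ⟨k', rfl⟩ := finSumFinEquiv.surjective k
      obtain ⟨l', rfl⟩ := finSumFinEquiv.surjective l
      cases k' with
      | inl k' =>
        cases l' with
        | inl l' =>
          rw [qTwo_inl, qTwo_inl, qTwo_inl, qTwo_inl, hi.le_iff_le, hj.le_iff_le]
        | inr l' =>
          rw [sTwo_inl, sTwo_inr] at hkl
          exact absurd hkl (by simp)
      | inr k' =>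
        cases l' with
        | inl l' =>
          rw [sTwo_inr, sTwo_inl] at hkl
          exact absurd hkl (by simp)
        | inr l' => rw [qTwo_inr, qTwo_inr, qTwo_inr, qTwo_inr]
    · have hval : ∀ ii : Fin n → ℚ,
        ((fun v : (k : Fin (n + m)) × MixVar da db (sTwo false true k) =>
            pickSide (a (qTwo ii r v.1)) (b (qTwo ii r v.1)) (sTwo false true v.1) v.2) ∘
          (Sum.elim
            (fun kw : Fin n × Fin db =>
              ⟨finSumFinEquiv (Sum.inl kw.1), cast (mix_eq_false (sTwo_inl false true kw.1)) kw.2⟩)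
            (fun l : Fin m =>
              ⟨finSumFinEquiv (Sum.inr l), cast (mix_eq_true (sTwo_inr false true l)) (w l)⟩)))
          = Sum.elim (fun v : Fin n × Fin db => b (ii v.1) v.2) p := by
        intro ii
        funext x
        cases x with
        | inl kw =>
          simp only [Function.comp_apply, Sum.elim_inl]
          rw [pickSide_cast_false _ _ (sTwo_inl false true kw.1) _ kw.2, qTwo_inl]
        | inr l =>
          simp only [Function.comp_apply, Sum.elim_inr]
          rw [pickSide_cast_true _ _ (sTwo_inr false true l) _ (w l), qTwo_inr, hrw]
      rw [Formula.realize_relabel, Formula.realize_relabel, hval i, hval j]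
      tauto

end Step1

section FailToIP

variable {L : FirstOrder.Language.{u, v}} {M : Type (max u v)} [L.Structure M]

private lemma iff_iff_self_aux (p t : Prop) : ((p ↔ t) ↔ t) ↔ p := by
  by_cases hp : p <;> by_cases ht : t <;> simp [hp, ht]

private lemma fail_to_IP [Nonempty M] {da db : ℕ} (a : ℚ → Fin da → M) (b : ℚ → Fin db → M)
    (R : ℚ → ℚ → Prop) (hR : IsRandomOBG R)
    (hind : IsLStarIndiscernible (L := L) R a b)
    {n : ℕ} (s : Fin n → Bool) (q q' : Fin n → ℚ)
    (ψ : L.Formula ((k : Fin n) × MixVar da db (s k)))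
    (hord : ∀ k l, s k = s l → (q k ≤ q l ↔ q' k ≤ q' l))
    (hne : ¬ (ψ.Realize (fun v => pickSide (a (q v.1)) (b (q v.1)) (s v.1) v.2) ↔
              ψ.Realize (fun v => pickSide (a (q' v.1)) (b (q' v.1)) (s v.1) v.2))) :
    ∃ (kk : ℕ) (ψ' : L.Formula ((Fin da ⊕ Fin db) ⊕ Fin kk)) (c : Fin kk → M),
      (∀ l, c l ∈ (⋃ i, Set.range (a i)) ∪ ⋃ i, Set.range (b i)) ∧ HasIPWithParams ψ' c := by
  classical
  set Val : (Fin n → ℚ) → ((k : Fin n) × MixVar da db (s k)) → M :=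
    fun qq v => pickSide (a (qq v.1)) (b (qq v.1)) (s v.1) v.2 with hVal
  set Compat : (ℚ → ℚ → Prop) → (Fin n → ℚ) → Prop :=
    fun e qb => (∀ k l, s k = s l → (qb k ≤ qb l ↔ q k ≤ q l)) ∧
      (∀ k l, s k = true → s l = false → (R (qb k) (qb l) ↔ e (q k) (q l))) with hCompat
  have hex : ∀ e, ∃ qb, (∀ k, s k = true → qb k = q k) ∧ Compat e qb := by
    intro e
    obtain ⟨qb, h1, h2, h3⟩ := exists_compat R hR s q e
    exact ⟨qb, h1, h2, h3⟩
  choose Q hQU hQc using hex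
  set Tr : (ℚ → ℚ → Prop) → Prop := fun e => ψ.Realize (Val (Q e)) with hTrdef
  have hTr : ∀ e qb, Compat e qb → (ψ.Realize (Val qb) ↔ Tr e) := by
    intro e qb hc
    exact hind n s qb (Q e)
      (sameQfType_of_compat R s q e qb (Q e) hc.1 hc.2 (hQc e).1 (hQc e).2) ψ
  have hTrExt : ∀ e e',
      (∀ k l, s k = true → s l = false → (e (q k) (q l) ↔ e' (q k) (q l))) →
      (Tr e ↔ Tr e') := by
    intro e e' h
    have hc : Compat e' (Q e) :=
      ⟨(hQc e).1, fun k l hk hl => ((hQc e).2 k l hk hl).trans (h k l hk hl)⟩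
    exact hTr e' (Q e) hc
  -- the two original configurations
  have hq : Compat (fun x y => R x y) q := ⟨fun _ _ _ => Iff.rfl, fun _ _ _ _ => Iff.rfl⟩
  have hq'eq : ∀ k l, q k = q l → s k = s l → q' k = q' l := by
    intro k l hkl hs
    exact le_antisymm ((hord k l hs).mp hkl.le) ((hord l k hs.symm).mp hkl.ge)
  set e' : ℚ → ℚ → Prop := fun x y =>
    ∃ k l, s k = true ∧ s l = false ∧ q k = x ∧ q l = y ∧ R (q' k) (q' l) with he'
  have hq' : Compat e' q' := by
    constructor
    · intro k l hs
      exact (hord k l hs).symm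
    · intro k l hk hl
      constructor
      · intro hr
        exact ⟨k, l, hk, hl, rfl, rfl, hr⟩
      · rintro ⟨k', l', hk', hl', hx, hy, hr⟩
        rwa [hq'eq k' k hx (hk'.trans hk.symm), hq'eq l' l hy (hl'.trans hl.symm)] at hr
  have hneTr : ¬ (Tr (fun x y => R x y) ↔ Tr e') := by
    intro hcon
    exact hne (((hTr _ q hq).trans hcon).trans (hTr _ q' hq').symm)
  -- hybrid chain
  set P : List (ℚ × ℚ) := (List.finRange n).flatMap
    (fun k => (List.finRange n).map (fun l => (q k, q l))) with hP
  have hPmem : ∀ k l : Fin n, (q k, q l) ∈ P := by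
    intro k l
    rw [hP, List.mem_flatMap]
    exact ⟨k, List.mem_finRange k, List.mem_map.mpr ⟨l, List.mem_finRange l, rfl⟩⟩
  set hyb : ℕ → ℚ → ℚ → Prop :=
    fun i x y => if (x, y) ∈ P.take i then e' x y else R x y with hhyb
  have h0 : Tr (hyb 0) ↔ Tr (fun x y => R x y) := by
    apply hTrExt
    intro k l _ _
    simp [hhyb]
  have hlen : Tr (hyb P.length) ↔ Tr e' := by
    apply hTrExt
    intro k l _ _
    simp [hhyb, List.take_length, hPmem k l]
  have hchain : ∃ i, ¬ (Tr (hyb i) ↔ Tr (hyb (i + 1))) := by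
    by_contra hcon
    push_neg at hcon
    have hall : ∀ j, Tr (hyb 0) ↔ Tr (hyb j) := by
      intro j
      induction j with
      | zero => exact Iff.rfl
      | succ j ih => exact ih.trans (hcon j)
    exact hneTr (h0.symm.trans ((hall P.length).trans hlen))
  obtain ⟨iP, hiP⟩ := hchain
  have hiPlt : iP < P.length := by
    by_contra hle
    push_neg at hle
    have heq : P.take iP = P.take (iP + 1) := by
      rw [List.take_of_length_le hle, List.take_of_length_le (hle.trans (Nat.le_succ iP))]
    apply hiP
    apply hTrExt
    intro k l _ _
    show (if (q k, q l) ∈ P.take iP then e' (q k) (q l) else R (q k) (q l)) ↔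
      (if (q k, q l) ∈ P.take (iP + 1) then e' (q k) (q l) else R (q k) (q l))
    by_cases hm : (q k, q l) ∈ P.take iP
    · rw [if_pos hm, if_pos (heq ▸ hm)]
    · rw [if_neg hm, if_neg (fun hc => hm (heq ▸ hc))]
  set p0 : ℚ × ℚ := P.get ⟨iP, hiPlt⟩ with hp0
  have htake : ∀ x : ℚ × ℚ, x ∈ P.take (iP + 1) ↔ x ∈ P.take iP ∨ x = p0 := by
    intro x
    rw [List.take_succ, List.mem_append, List.getElem?_eq_getElem hiPlt]
    simp [hp0]
  have hhyb_succ : ∀ x y : ℚ, (x, y) ≠ p0 → (hyb (iP + 1) x y ↔ hyb iP x y) := by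
    intro x y hxy
    show (if (x, y) ∈ P.take (iP + 1) then e' x y else R x y) ↔
      (if (x, y) ∈ P.take iP then e' x y else R x y)
    by_cases hmem : (x, y) ∈ P.take iP
    · rw [if_pos hmem, if_pos ((htake _).mpr (Or.inl hmem))]
    · rw [if_neg hmem, if_neg (fun hc => ((htake _).mp hc).elim hmem hxy)]
  -- the flip pair is relevant
  have hrel : ∃ k₀ l₀ : Fin n, s k₀ = true ∧ s l₀ = false ∧ q k₀ = p0.1 ∧ q l₀ = p0.2 := by
    by_contra hcon
    push_neg at hcon
    apply hiP
    apply hTrExt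
    intro k l hk hl
    have : (q k, q l) ≠ p0 := by
      intro heq
      exact (hcon k l hk hl (congrArg Prod.fst heq)) (congrArg Prod.snd heq)
    exact (hhyb_succ _ _ this).symm
  obtain ⟨k₀, l₀, hk₀, hl₀, hx₀, hy₀⟩ := hrel
  set x₀ := p0.1 with hx₀def
  set y₀ := p0.2 with hy₀def
  have hp0eq : p0 = (x₀, y₀) := rfl
  set e₀ : ℚ → ℚ → Prop := hyb iP with he₀
  set eSet : Prop → ℚ → ℚ → Prop :=
    fun t x y => if (x, y) = (x₀, y₀) then t else e₀ x y with heSet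
  -- Tr of the two flips differ
  have hflip : ¬ (Tr (eSet True) ↔ Tr (eSet False)) := by
    have hcase : ∀ f : ℚ → ℚ → Prop, (∀ x y, (x, y) ≠ (x₀, y₀) → (f x y ↔ e₀ x y)) →
        (Tr f ↔ Tr (eSet (f x₀ y₀))) := by
      intro f hf
      apply hTrExt
      intro k l _ _
      show f (q k) (q l) ↔ (if ((q k : ℚ), (q l : ℚ)) = (x₀, y₀) then f x₀ y₀ else e₀ (q k) (q l))
      by_cases hxy : ((q k : ℚ), (q l : ℚ)) = (x₀, y₀)
      · rw [if_pos hxy, show (q k : ℚ) = x₀ from congrArg Prod.fst hxy,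
          show (q l : ℚ) = y₀ from congrArg Prod.snd hxy]
      · rw [if_neg hxy]
        exact hf _ _ hxy
    have hfa : Tr e₀ ↔ Tr (eSet (e₀ x₀ y₀)) := hcase e₀ (fun _ _ _ => Iff.rfl)
    have hfb : Tr (hyb (iP + 1)) ↔ Tr (eSet (hyb (iP + 1) x₀ y₀)) :=
      hcase _ (fun x y hxy => (hhyb_succ x y (hp0eq ▸ hxy)))
    intro hcon
    apply hiP
    have hiff : ∀ t1 t2 : Prop, (Tr (eSet t1) ↔ Tr (eSet t2)) := by
      intro t1 t2
      by_cases h1 : t1 <;> by_cases h2 : t2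
      · exact hTrExt _ _ (fun k l _ _ => by rw [heSet]; by_cases hxy : ((q k:ℚ), (q l:ℚ)) = (x₀, y₀) <;> simp [hxy, h1, h2])
      · exact (hTrExt _ _ (fun k l _ _ => by rw [heSet]; by_cases hxy : ((q k:ℚ), (q l:ℚ)) = (x₀, y₀) <;> simp [hxy, h1])).trans
          ((hcon.trans (hTrExt _ _ (fun k l _ _ => by rw [heSet]; by_cases hxy : ((q k:ℚ), (q l:ℚ)) = (x₀, y₀) <;> simp [hxy, h2]))))
      · exact ((hTrExt _ _ (fun k l _ _ => by rw [heSet]; by_cases hxy : ((q k:ℚ), (q l:ℚ)) = (x₀, y₀) <;> simp [hxy, h1])).trans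
          (hcon.symm.trans (hTrExt _ _ (fun k l _ _ => by rw [heSet]; by_cases hxy : ((q k:ℚ), (q l:ℚ)) = (x₀, y₀) <;> simp [hxy, h2]))))
      · exact hTrExt _ _ (fun k l _ _ => by rw [heSet]; by_cases hxy : ((q k:ℚ), (q l:ℚ)) = (x₀, y₀) <;> simp [hxy, h1, h2])
    exact (he₀ ▸ hfa).trans ((hiff _ _).trans hfb.symm)
  -- polarity normalization
  have hkey : ∀ p : Prop, Tr (eSet p) ↔ (p ↔ Tr (eSet True)) := by
    have hcc : ∀ p1 p2 : Prop, (p1 ↔ p2) → (Tr (eSet p1) ↔ Tr (eSet p2)) := by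
      intro p1 p2 h12
      apply hTrExt
      intro k l _ _
      show (if ((q k : ℚ), (q l : ℚ)) = (x₀, y₀) then p1 else e₀ (q k) (q l)) ↔
        (if ((q k : ℚ), (q l : ℚ)) = (x₀, y₀) then p2 else e₀ (q k) (q l))
      by_cases hxy : ((q k : ℚ), (q l : ℚ)) = (x₀, y₀)
      · rw [if_pos hxy, if_pos hxy]; exact h12
      · rw [if_neg hxy, if_neg hxy]
    intro p
    by_cases hp : p
    · rw [hcc p True (by simp [hp])]
      exact ⟨fun h => ⟨fun _ => h, fun _ => hp⟩, fun hiff => hiff.mp hp⟩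
    · rw [hcc p False (by simp [hp])]
      constructor
      · intro h
        refine ⟨fun hpp => absurd hpp hp, fun hT => ?_⟩
        exact absurd (iff_of_true hT h) hflip
      · intro hiff
        by_contra hF
        exact hflip (iff_of_false (fun hT => hp (hiff.mpr hT)) hF)
  -- base assignment for e₀
  set qb := Q e₀ with hqbdef
  have hqbc := hQc e₀
  have hqbU := hQU e₀
  have hqbinj : ∀ l l', s l = false → s l' = false → qb l = qb l' → q l = q l' :=
    fun l l' hl hl' heq => le_antisymm ((hqbc.1 l l' (hl.trans hl'.symm)).mp heq.le)
      ((hqbc.1 l' l (hl'.trans hl.symm)).mp heq.ge)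
  -- the rows
  set Uvals := (Finset.univ.filter (fun k => s k = true)).image q with hUvals
  set Fu := (Finset.univ.filter (fun l => s l = false ∧ q l ≠ y₀ ∧ e₀ x₀ (q l))).image qb with hFu
  set Gu := (Finset.univ.filter (fun l => s l = false ∧ q l ≠ y₀ ∧ ¬ e₀ x₀ (q l))).image qb
    with hGu
  have hdisjU : Disjoint Fu Gu := by
    rw [Finset.disjoint_left]
    intro x hF hG
    obtain ⟨l, hl, rfl⟩ := Finset.mem_image.mp hF
    obtain ⟨l', hl', heq⟩ := Finset.mem_image.mp hG
    rw [Finset.mem_filter] at hl hl'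
    have := hqbinj l' l hl'.2.1 hl.2.1 heq
    exact hl'.2.2.2 (this ▸ hl.2.2.2)
  obtain ⟨u, humono, huS, hux, hub⟩ :=
    DU.exists_seq (hR.2.2.2.2.1 Fu Gu hdisjU) Uvals x₀
  have huedge : ∀ (i0 : ℕ) l, s l = false → q l ≠ y₀ → (R (u i0) (qb l) ↔ e₀ x₀ (q l)) := by
    intro i0 l hl hy
    by_cases he : e₀ x₀ (q l)
    · exact iff_of_true ((huS i0).1 (qb l) (Finset.mem_image_of_mem qb
        (Finset.mem_filter.mpr ⟨Finset.mem_univ _, hl, hy, he⟩))) he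
    · exact iff_of_false ((huS i0).2 (qb l) (Finset.mem_image_of_mem qb
        (Finset.mem_filter.mpr ⟨Finset.mem_univ _, hl, hy, he⟩))) he
  have huord : ∀ (i0 : ℕ) k, s k = true → q k ≠ x₀ →
      ((u i0 ≤ q k ↔ x₀ ≤ q k) ∧ (q k ≤ u i0 ↔ q k ≤ x₀)) := by
    intro i0 k hk hqk
    have hmem : q k ∈ Uvals := Finset.mem_image_of_mem q
      (Finset.mem_filter.mpr ⟨Finset.mem_univ _, hk⟩)
    rcases lt_trichotomy (q k) x₀ with hlt | heq | hgt
    · have h1 : q k < u i0 := hlt.trans (hux i0)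
      constructor
      · exact iff_of_false (not_le.mpr h1) (not_le.mpr hlt)
      · exact iff_of_true h1.le hlt.le
    · exact absurd heq hqk
    · have h1 : u i0 < q k := hub i0 (q k) hmem hgt
      constructor
      · exact iff_of_true h1.le hgt.le
      · exact iff_of_false (not_le.mpr h1) (not_le.mpr hgt)
  -- master claim
  have master : ∀ (N : ℕ) (S : Set ℕ), ∃ vv : ℚ, ∀ i0 : ℕ, i0 < N →
      (ψ.Realize (Val (fun k => if s k = true then (if q k = x₀ then u i0 else q k)
          else (if q k = y₀ then vv else qb k))) ↔ (i0 ∈ S ↔ Tr (eSet True))) := by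
    intro N S
    set Fv := ((Finset.univ.filter (fun k => s k = true ∧ q k ≠ x₀ ∧ e₀ (q k) y₀)).image q) ∪
      (((Finset.range N).filter (fun i0 => i0 ∈ S)).image u) with hFv
    set Gv := ((Finset.univ.filter (fun k => s k = true ∧ q k ≠ x₀ ∧ ¬ e₀ (q k) y₀)).image q) ∪
      (((Finset.range N).filter (fun i0 => i0 ∉ S)).image u) with hGv
    have hqu : ∀ (k : Fin n) (i0 : ℕ), s k = true → q k ≠ x₀ → q k ≠ u i0 := by
      intro k i0 hk hqk heq
      rcases lt_trichotomy (q k) x₀ with hlt | heqq | hgt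
      · exact absurd heq.symm (ne_of_gt (hlt.trans (hux i0)))
      · exact hqk heqq
      · exact absurd heq (ne_of_gt (hub i0 (q k) (Finset.mem_image_of_mem q
          (Finset.mem_filter.mpr ⟨Finset.mem_univ _, hk⟩)) hgt))
    have hdisjV : Disjoint Fv Gv := by
      rw [Finset.disjoint_left]
      intro x hF hG
      rcases Finset.mem_union.mp hF with hF | hF <;> rcases Finset.mem_union.mp hG with hG | hG
      · obtain ⟨k, hk, rfl⟩ := Finset.mem_image.mp hF
        obtain ⟨k', hk', heq⟩ := Finset.mem_image.mp hG
        rw [Finset.mem_filter] at hk hk'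
        exact hk'.2.2.2 (heq ▸ hk.2.2.2)
      · obtain ⟨k, hk, rfl⟩ := Finset.mem_image.mp hF
        obtain ⟨i0, hi0, heq⟩ := Finset.mem_image.mp hG
        rw [Finset.mem_filter] at hk
        exact hqu k i0 hk.2.1 hk.2.2.1 heq.symm
      · obtain ⟨i0, hi0, rfl⟩ := Finset.mem_image.mp hF
        obtain ⟨k, hk, heq⟩ := Finset.mem_image.mp hG
        rw [Finset.mem_filter] at hk
        exact hqu k i0 hk.2.1 hk.2.2.1 heq
      · obtain ⟨i0, hi0, rfl⟩ := Finset.mem_image.mp hF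
        obtain ⟨i0', hi0', heq⟩ := Finset.mem_image.mp hG
        rw [Finset.mem_filter] at hi0 hi0'
        have : i0' = i0 := humono.injective heq
        exact hi0'.2 (this ▸ hi0.2)
    set Bv := (Finset.univ.filter (fun l => s l = false)).image qb with hBv
    obtain ⟨vv, hvvS, hvvgt, hvvcut⟩ :=
      DU.exists_in_cut (hR.2.2.2.2.2 Fv Gv hdisjV) Bv (qb l₀)
    have hvedge1 : ∀ k, s k = true → q k ≠ x₀ → (R (q k) vv ↔ e₀ (q k) y₀) := by
      intro k hk hqk
      by_cases he : e₀ (q k) y₀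
      · exact iff_of_true (hvvS.1 (q k) (Finset.mem_union_left _
          (Finset.mem_image_of_mem q (Finset.mem_filter.mpr
            ⟨Finset.mem_univ _, hk, hqk, he⟩)))) he
      · exact iff_of_false (hvvS.2 (q k) (Finset.mem_union_left _
          (Finset.mem_image_of_mem q (Finset.mem_filter.mpr
            ⟨Finset.mem_univ _, hk, hqk, he⟩)))) he
    have hvedge2 : ∀ i0 : ℕ, i0 < N → (R (u i0) vv ↔ i0 ∈ S) := by
      intro i0 hi0
      by_cases hS : i0 ∈ S
      · exact iff_of_true (hvvS.1 (u i0) (Finset.mem_union_right _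
          (Finset.mem_image_of_mem u (Finset.mem_filter.mpr
            ⟨Finset.mem_range.mpr hi0, hS⟩)))) hS
      · exact iff_of_false (hvvS.2 (u i0) (Finset.mem_union_right _
          (Finset.mem_image_of_mem u (Finset.mem_filter.mpr
            ⟨Finset.mem_range.mpr hi0, hS⟩)))) hS
    have hvord : ∀ l, s l = false → q l ≠ y₀ →
        ((vv ≤ qb l ↔ y₀ ≤ q l) ∧ (qb l ≤ vv ↔ q l ≤ y₀)) := by
      intro l hl hql
      have hmem : qb l ∈ Bv := Finset.mem_image_of_mem qb
        (Finset.mem_filter.mpr ⟨Finset.mem_univ _, hl⟩)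
      have hiff : qb l ≤ qb l₀ ↔ q l ≤ y₀ := by
        rw [hqbc.1 l l₀ (hl.trans hl₀.symm), hy₀]
      rcases lt_trichotomy (q l) y₀ with hlt | heq | hgt
      · have h1 : qb l < vv := (hvvcut (qb l) hmem).1 (hiff.mpr hlt.le)
        constructor
        · exact iff_of_false (not_le.mpr h1) (not_le.mpr hlt)
        · exact iff_of_true h1.le hlt.le
      · exact absurd heq hql
      · have h2 : qb l₀ < qb l := by
          rcases lt_or_ge (qb l₀) (qb l) with h | h
          · exact h
          · exact absurd (hiff.mp h) (not_le.mpr hgt)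
        have h1 : vv < qb l := (hvvcut (qb l) hmem).2 h2
        constructor
        · exact iff_of_true h1.le hgt.le
        · exact iff_of_false (not_le.mpr h1) (not_le.mpr hgt)
    refine ⟨vv, fun i0 hi0 => ?_⟩
    have hcompatA : Compat (eSet (i0 ∈ S)) (fun k => if s k = true then
        (if q k = x₀ then u i0 else q k) else (if q k = y₀ then vv else qb k)) := by
      constructor
      · intro k l hskl
        dsimp only
        by_cases hsk : s k = true
        · have hsl : s l = true := hskl ▸ hsk
          rw [if_pos hsk, if_pos hsl]
          by_cases hk : q k = x₀ <;> by_cases hl : q l = x₀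
          · rw [if_pos hk, if_pos hl, hk, hl]
            exact iff_of_true le_rfl le_rfl
          · rw [if_pos hk, if_neg hl, hk]
            exact (huord i0 l hsl hl).1
          · rw [if_neg hk, if_pos hl, hl]
            exact (huord i0 k hsk hk).2
          · rw [if_neg hk, if_neg hl]
        · have hsl : ¬ s l = true := fun h => hsk (hskl ▸ h)
          rw [if_neg hsk, if_neg hsl]
          have hskf : s k = false := by simpa using hsk
          have hslf : s l = false := by simpa using hsl
          by_cases hk : q k = y₀ <;> by_cases hl : q l = y₀
          · rw [if_pos hk, if_pos hl, hk, hl]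
            exact iff_of_true le_rfl le_rfl
          · rw [if_pos hk, if_neg hl, hk]
            exact (hvord l hslf hl).1
          · rw [if_neg hk, if_pos hl, hl]
            exact (hvord k hskf hk).2
          · rw [if_neg hk, if_neg hl]
            exact hqbc.1 k l (hskf.trans hslf.symm)
      · intro k l hsk hsl
        dsimp only
        rw [if_pos hsk, if_neg (show ¬ (s l = true) by simp [hsl])]
        show _ ↔ (if ((q k : ℚ), (q l : ℚ)) = (x₀, y₀) then (i0 ∈ S) else e₀ (q k) (q l))
        by_cases hk : q k = x₀ <;> by_cases hl : q l = y₀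
        · rw [if_pos hk, if_pos hl, if_pos (by rw [hk, hl])]
          exact hvedge2 i0 hi0
        · rw [if_pos hk, if_neg hl,
            if_neg (fun hc : ((q k : ℚ), (q l : ℚ)) = (x₀, y₀) =>
              hl (congrArg Prod.snd hc)), hk]
          exact huedge i0 l hsl hl
        · rw [if_neg hk, if_pos hl,
            if_neg (fun hc : ((q k : ℚ), (q l : ℚ)) = (x₀, y₀) =>
              hk (congrArg Prod.fst hc)), hl]
          exact hvedge1 k hsk hk
        · rw [if_neg hk, if_neg hl,
            if_neg (fun hc : ((q k : ℚ), (q l : ℚ)) = (x₀, y₀) =>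
              hk (congrArg Prod.fst hc))]
          have hb := hqbc.2 k l hsk hsl
          rw [hqbU k hsk] at hb
          exact hb
    exact (hTr _ _ hcompatA).trans (hkey (i0 ∈ S))
  -- the IP formula with parameters
  set kk := n * da + n * db with hkk
  set enc : ((Fin n × Fin da) ⊕ (Fin n × Fin db)) ≃ Fin kk :=
    (Equiv.sumCongr finProdFinEquiv finProdFinEquiv).trans finSumFinEquiv with henc
  set g : ((k : Fin n) × MixVar da db (s k)) → ((Fin da ⊕ Fin db) ⊕ Fin kk) := fun v =>
    pickSide (M := (Fin da ⊕ Fin db) ⊕ Fin kk)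
      (fun w0 => if q v.1 = x₀ then Sum.inl (Sum.inl w0) else Sum.inr (enc (Sum.inl (v.1, w0))))
      (fun w0 => if q v.1 = y₀ then Sum.inl (Sum.inr w0) else Sum.inr (enc (Sum.inr (v.1, w0))))
      (s v.1) v.2 with hg
  set cpar : Fin kk → M := fun j =>
    Sum.elim (fun kw : Fin n × Fin da => a (q kw.1) kw.2)
      (fun lw : Fin n × Fin db => b (qb lw.1) lw.2) (enc.symm j) with hcpar
  -- the key composition identity in M
  have hgM : ∀ (i0 : ℕ) (vv : ℚ) (fa : Fin da → M) (fb : Fin db → M),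
      fa = a (u i0) → fb = b vv →
      ((Sum.elim (Sum.elim fa fb) cpar) ∘ g) =
        Val (fun k => if s k = true then (if q k = x₀ then u i0 else q k)
          else (if q k = y₀ then vv else qb k)) := by
    rintro i0 vv fa fb rfl rfl
    funext v
    obtain ⟨k, w⟩ := v
    rw [hVal, hg, hcpar]
    simp only [Function.comp_apply]
    revert w
    cases hsk : s k with
    | true =>
      intro w
      by_cases hk : q k = x₀ <;>
        simp [pickSide, hk, Equiv.symm_apply_apply] <;> rfl
    | false =>
      intro w
      by_cases hk : q k = y₀ <;>
        simp [pickSide, hk, Equiv.symm_apply_apply] <;> rfl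
  refine ⟨kk, ψ.relabel g, cpar, ?_, ?_⟩
  · intro j
    rw [hcpar]
    dsimp only
    rcases hj : enc.symm j with kw | lw
    · rw [Sum.elim_inl]
      exact Or.inl (Set.mem_iUnion.mpr ⟨q kw.1, Set.mem_range_self kw.2⟩)
    · rw [Sum.elim_inr]
      exact Or.inr (Set.mem_iUnion.mpr ⟨qb lw.1, Set.mem_range_self lw.2⟩)
  -- compactness
  · set CC := M ⊕ ((ℕ × Fin da) ⊕ ((Set ℕ) × Fin db)) with hCC
    set hmap : ℕ → Set ℕ → ((Fin da ⊕ Fin db) ⊕ Fin kk) → CC := fun i0 S =>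
      Sum.elim (Sum.elim (fun w0 => Sum.inr (Sum.inl (i0, w0)))
        (fun w0 => Sum.inr (Sum.inr (S, w0)))) (fun j => Sum.inl (cpar j)) with hhmap
    set ipSen : ℕ → Set ℕ → L[[CC]].Sentence := fun i0 S =>
      Formula.equivSentence (if i0 ∈ S then ((ψ.relabel g).relabel (hmap i0 S))
        else ((ψ.relabel g).relabel (hmap i0 S)).not) with hipSen
    set Δ : L[[CC]].Theory :=
      (fun φ0 : L.Formula M => Formula.equivSentence (φ0.relabel Sum.inl)) ''
        {φ0 : L.Formula M | φ0.Realize (id : M → M)} with hΔ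
    set Θ : L[[CC]].Theory := Δ ∪ Set.range (fun p : ℕ × Set ℕ => ipSen p.1 p.2) with hΘ
    have hsat : Θ.IsSatisfiable := by
      rw [Theory.isSatisfiable_iff_isFinitelySatisfiable]
      intro T0 hT0
      set N0 : ℕ := (T0.sup fun σ =>
        if h : ∃ p : ℕ × Set ℕ, ipSen p.1 p.2 = σ then (Classical.choose h).1 + 1 else 0)
        with hN0
      choose vfun hvfun using fun S : Set ℕ => master N0 {i0 | i0 ∈ S ↔ Tr (eSet True)}
      letI : (constantsOn CC).Structure M := constantsOn.structure
        (Sum.elim (id : M → M) (Sum.elim (fun p : ℕ × Fin da => a (u p.1) p.2)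
          (fun p : (Set ℕ) × Fin db => b (vfun p.1) p.2)))
      have hconM : ∀ cc : CC, ((L.con cc : L[[CC]].Constants) : M) =
          (Sum.elim (id : M → M) (Sum.elim (fun p : ℕ × Fin da => a (u p.1) p.2)
            (fun p : (Set ℕ) × Fin db => b (vfun p.1) p.2))) cc := fun _ => rfl
      have hmodel : ∀ σ ∈ (T0 : L[[CC]].Theory), M ⊨ σ := by
        intro σ hσ
        rcases hT0 hσ with ⟨φ0, hφ0, rfl⟩ | ⟨p, hpσ⟩
        · rw [Formula.realize_equivSentence, Formula.realize_relabel]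
          exact hφ0
        · have hexp : ∃ p' : ℕ × Set ℕ, ipSen p'.1 p'.2 = σ := ⟨p, hpσ⟩
          set p1 := Classical.choose hexp with hp1
          have hp1σ : ipSen p1.1 p1.2 = σ := Classical.choose_spec hexp
          have hlt : p1.1 < N0 := by
            have := Finset.le_sup (f := fun σ =>
              if h : ∃ p : ℕ × Set ℕ, ipSen p.1 p.2 = σ then (Classical.choose h).1 + 1 else 0) hσ
            rw [dif_pos hexp] at this
            exact Nat.lt_of_succ_le this
          rw [← hp1σ, hipSen]
          dsimp only
          rw [Formula.realize_equivSentence]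
          have hcomp : ((fun cc : CC => ((L.con cc : L[[CC]].Constants) : M)) ∘ hmap p1.1 p1.2)
              = Sum.elim (Sum.elim (a (u p1.1)) (b (vfun p1.2))) cpar := by
            funext x
            rcases x with (w0 | w0) | j <;> rfl
          have hiff := (hvfun p1.2 p1.1 hlt).trans
            (iff_iff_self_aux (p1.1 ∈ p1.2) (Tr (eSet True)))
          by_cases hi : p1.1 ∈ p1.2
          · rw [if_pos hi, Formula.realize_relabel, Formula.realize_relabel, hcomp,
              hgM p1.1 (vfun p1.2) _ _ rfl rfl]
            exact hiff.mpr hi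
          · rw [if_neg hi, Formula.realize_not, Formula.realize_relabel,
              Formula.realize_relabel, hcomp, hgM p1.1 (vfun p1.2) _ _ rfl rfl]
            exact fun hcon => hi (hiff.mp hcon)
      haveI : M ⊨ (T0 : L[[CC]].Theory) := (Theory.model_iff _).mpr hmodel
      exact Theory.Model.isSatisfiable M
    obtain ⟨N₀⟩ := hsat
    letI instLN : L.Structure N₀ := (L.lhomWithConstants CC).reduct N₀
    haveI instExp : (L.lhomWithConstants CC).IsExpansionOn N₀ :=
      ⟨fun _ _ => rfl, fun _ _ => rfl⟩
    have hΘmem : ∀ σ ∈ Θ, N₀ ⊨ σ := fun σ hσ => Theory.realize_sentence_of_mem Θ hσ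
    have hΔreal : ∀ φ0 : L.Formula M, φ0.Realize (id : M → M) →
        φ0.Realize (fun m => ((L.con (Sum.inl m : CC) : L[[CC]].Constants) : N₀)) := by
      intro φ0 h0
      have := hΘmem _ (Or.inl ⟨φ0, h0, rfl⟩)
      rw [Formula.realize_equivSentence, Formula.realize_relabel] at this
      exact this
    have hemb : ∀ (nn : ℕ) (φ : L.Formula (Fin nn)) (x : Fin nn → M),
        φ.Realize ((fun m => ((L.con (Sum.inl m : CC) : L[[CC]].Constants) : N₀)) ∘ x) ↔
          φ.Realize x := by
      intro nn φ x
      by_cases h : φ.Realize x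
      · have := hΔreal (φ.relabel x)
          (by rw [Formula.realize_relabel]; rwa [Function.id_comp])
        rw [Formula.realize_relabel] at this
        exact iff_of_true this h
      · have := hΔreal ((φ.relabel x).not)
          (by rw [Formula.realize_not, Formula.realize_relabel]
              rwa [Function.id_comp])
        rw [Formula.realize_not, Formula.realize_relabel] at this
        exact iff_of_false this h
    refine ⟨⟨N₀, ⟨fun m => ((L.con (Sum.inl m : CC) : L[[CC]].Constants) : N₀),
      fun {nn} φ x => hemb nn φ x⟩⟩,
      fun i0 w0 => ((L.con (Sum.inr (Sum.inl (i0, w0)) : CC) : L[[CC]].Constants) : N₀),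
      fun S w0 => ((L.con (Sum.inr (Sum.inr (S, w0)) : CC) : L[[CC]].Constants) : N₀), ?_⟩
    intro i0 S
    have hmem := hΘmem _ (Or.inr ⟨(i0, S), rfl⟩)
    rw [hipSen] at hmem
    dsimp only at hmem
    rw [Formula.realize_equivSentence] at hmem
    have hcomp : ((fun cc : CC => ((L.con cc : L[[CC]].Constants) : N₀)) ∘ hmap i0 S)
        = Sum.elim (Sum.elim
            (fun w0 => ((L.con (Sum.inr (Sum.inl (i0, w0)) : CC) : L[[CC]].Constants) : N₀))
            (fun w0 => ((L.con (Sum.inr (Sum.inr (S, w0)) : CC) : L[[CC]].Constants) : N₀)))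
          ((fun m => ((L.con (Sum.inl m : CC) : L[[CC]].Constants) : N₀)) ∘ cpar) := by
      funext x
      rcases x with (w0 | w0) | j <;> rfl
    by_cases hi : i0 ∈ S
    · rw [if_pos hi, Formula.realize_relabel, hcomp] at hmem
      exact iff_of_true hmem hi
    · rw [if_neg hi, Formula.realize_not, Formula.realize_relabel, hcomp] at hmem
      exact iff_of_false hmem hi


end FailToIP

/-- Lemma 2: If `(āᵢ, b̄ᵢ : i ∈ ℚ)` is `L*`-indiscernible (indexed by the random
ordered bipartite graph `G*`), then either the two sequences `(āᵢ)` and `(b̄ᵢ)` are mutually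
indiscernible, or some formula `φ(x̄; ȳ)` with `|x̄| = |āᵢ|`, `|ȳ| = |b̄ᵢ|` and parameters
from `{āᵢ, b̄ᵢ : i ∈ ℚ}` has the independence property. -/
theorem mutually_indiscernible_or_IP {L : FirstOrder.Language.{u, v}} (T : L.Theory)
    (hT : T.IsComplete) (M : Type (max u v)) [L.Structure M] [Nonempty M] (hM : M ⊨ T)
    {da db : ℕ} (a : ℚ → Fin da → M) (b : ℚ → Fin db → M)
    (R : ℚ → ℚ → Prop) (hR : IsRandomOBG R)
    (hind : IsLStarIndiscernible (L := L) R a b) :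
    MutuallyIndiscernible (L := L) a b ∨
      ∃ (k : ℕ) (ψ : L.Formula ((Fin da ⊕ Fin db) ⊕ Fin k)) (c : Fin k → M),
        (∀ l, c l ∈ (⋃ i, Set.range (a i)) ∪ ⋃ i, Set.range (b i)) ∧
          HasIPWithParams ψ c := by
  by_cases hmut : MutuallyIndiscernible (L := L) a b
  · exact Or.inl hmut
  · obtain ⟨n, s, q, q', ψ0, hord0, hne0⟩ := fail_of_not_mutually a b hmut
    exact Or.inr (fail_to_IP a b R hR hind s q q' ψ0 hord0 hne0)
end

section
/- Let (ℚ; <, R_φ) be a model of the theory of the random ordered graph (the Fraïssé limit of finite ordered graphs), where R_φ is a symmetric irreflexive binary relation on ℚ. Then there exist subsets I, J ⊆ ℚ with I < J (every element of I is less than every element of J), each of order type ℚ, such that I and J are antichains for R_φ (no R_φ-edges within I or within J), and the ordered bipartite graph (I, <; J, <; R_φ ∩ (I × J)) is isomorphic to the random ordered bipartite graph G*. -/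
open FirstOrder FirstOrder.Language

universe u v

namespace RandOGAux

attribute [local instance] Classical.propDecidable

variable (R : ℚ → ℚ → Prop)

/-- The genericity hypothesis. -/
def Gen : Prop :=
  ∀ F G : Finset ℚ, Disjoint F G →
    DenseUnbounded {x : ℚ | x ∉ F ∧ x ∉ G ∧ (∀ f ∈ F, R x f) ∧ ∀ g ∈ G, ¬R x g}

lemma exists_witness (hgen : Gen R) (F C : Finset ℚ) (hd : Disjoint F C) {u v : ℚ}
    (huv : u < v) :
    ∃ z : ℚ, (u < z ∧ z < v) ∧ z ∉ F ∧ z ∉ C ∧ (∀ f ∈ F, R z f) ∧ ∀ g ∈ C, ¬R z g := by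
  obtain ⟨z, hz, h1, h2⟩ := (hgen F C hd).1 u v huv
  exact ⟨z, ⟨h1, h2⟩, hz.1, hz.2.1, hz.2.2.1, hz.2.2.2⟩

/-- A requirement. -/
structure Req where
  side : Bool
  F : Finset ℚ
  G : Finset ℚ
  u : ℚ
  v : ℚ

instance : Countable Req :=
  Function.Injective.countable (f := fun t : Req => (t.side, t.F, t.G, t.u, t.v))
    (fun a b h => by cases a; cases b; simpa using h)

instance : Nonempty Req := ⟨⟨true, ∅, ∅, 0, 0⟩⟩

noncomputable def enum : ℕ → Req := fun n =>
  (exists_surjective_nat Req).choose n.unpair.1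

lemma enum_spec (t : Req) (N : ℕ) : ∃ n, N ≤ n ∧ enum n = t := by
  obtain ⟨k, hk⟩ := (exists_surjective_nat Req).choose_spec t
  exact ⟨Nat.pair k N, Nat.right_le_pair k N, by simp [enum, Nat.unpair_pair, hk]⟩

def Applicable (t : Req) (P : Finset ℚ × Finset ℚ) : Prop :=
  t.u < t.v ∧ (t.side = true → t.F ⊆ P.2 ∧ t.v ≤ 0) ∧ (t.side = false → t.F ⊆ P.1 ∧ 0 ≤ t.u)

noncomputable def step (hgen : Gen R) (t : Req) (P : Finset ℚ × Finset ℚ) :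
    Finset ℚ × Finset ℚ :=
  if h : Applicable t P then
    if t.side then
      (insert (exists_witness R hgen t.F ((P.1 ∪ P.2 ∪ t.G) \ t.F) Finset.disjoint_sdiff
        h.1).choose P.1, P.2)
    else
      (P.1, insert (exists_witness R hgen t.F ((P.1 ∪ P.2 ∪ t.G) \ t.F) Finset.disjoint_sdiff
        h.1).choose P.2)
  else P

lemma step_subset (hgen : Gen R) (t : Req) (P : Finset ℚ × Finset ℚ) :
    P.1 ⊆ (step R hgen t P).1 ∧ P.2 ⊆ (step R hgen t P).2 := by
  unfold step
  split
  · split <;> exact ⟨by simp [Finset.subset_insert], by simp [Finset.subset_insert]⟩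
  · exact ⟨subset_rfl, subset_rfl⟩

lemma step_spec (hgen : Gen R) (t : Req) (P : Finset ℚ × Finset ℚ) (h : Applicable t P) :
    ∃ z : ℚ, (t.u < z ∧ z < t.v) ∧ z ∉ t.F ∧ z ∉ (P.1 ∪ P.2 ∪ t.G) \ t.F ∧
      (∀ f ∈ t.F, R z f) ∧ (∀ g ∈ (P.1 ∪ P.2 ∪ t.G) \ t.F, ¬R z g) ∧
      step R hgen t P = (if t.side then (insert z P.1, P.2) else (P.1, insert z P.2)) := by
  have w := exists_witness R hgen t.F ((P.1 ∪ P.2 ∪ t.G) \ t.F) Finset.disjoint_sdiff h.1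
  refine ⟨w.choose, w.choose_spec.1, w.choose_spec.2.1, w.choose_spec.2.2.1,
    w.choose_spec.2.2.2.1, w.choose_spec.2.2.2.2, ?_⟩
  unfold step
  rw [dif_pos h]

noncomputable def seq (hgen : Gen R) : ℕ → Finset ℚ × Finset ℚ
  | 0 => (∅, ∅)
  | n + 1 => step R hgen (enum n) (seq hgen n)

lemma seq_mono (hgen : Gen R) {n m : ℕ} (h : n ≤ m) :
    (seq R hgen n).1 ⊆ (seq R hgen m).1 ∧ (seq R hgen n).2 ⊆ (seq R hgen m).2 := by
  induction m with
  | zero => simp_all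
  | succ m ih =>
    rcases Nat.lt_or_ge n (m + 1) with h' | h'
    · have := ih (Nat.lt_succ_iff.mp h')
      exact ⟨this.1.trans (step_subset R hgen _ _).1, this.2.trans (step_subset R hgen _ _).2⟩
    · have : n = m + 1 := le_antisymm h h'
      subst this; exact ⟨subset_rfl, subset_rfl⟩

lemma seq_inv (hgen : Gen R) (hsymm : Symmetric R) (hirr : Irreflexive R) (n : ℕ) :
    (∀ x ∈ (seq R hgen n).1, x < 0) ∧ (∀ x ∈ (seq R hgen n).2, 0 < x) ∧
    (∀ x ∈ (seq R hgen n).1, ∀ y ∈ (seq R hgen n).1, ¬R x y) ∧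
    (∀ x ∈ (seq R hgen n).2, ∀ y ∈ (seq R hgen n).2, ¬R x y) := by
  induction n with
  | zero => simp [seq]
  | succ n ih =>
    obtain ⟨hI, hJ, hAI, hAJ⟩ := ih
    by_cases h : Applicable (enum n) (seq R hgen n)
    · obtain ⟨z, hz1, hzF, hzC, hzR, hzNR, hstep⟩ := step_spec R hgen (enum n) (seq R hgen n) h
      have hseq : seq R hgen (n + 1) =
          (if (enum n).side then (insert z (seq R hgen n).1, (seq R hgen n).2)
            else ((seq R hgen n).1, insert z (seq R hgen n).2)) := hstep
      have hz_not_old : ∀ y, y ∈ (seq R hgen n).1 ∪ (seq R hgen n).2 → y ∉ (enum n).F →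
          ¬R z y := fun y hy hyF => hzNR y (Finset.mem_sdiff.mpr
        ⟨Finset.mem_union_left _ hy, hyF⟩)
      rcases hside : (enum n).side with _ | _
      · -- side = false : z added to J-part
        rw [hside, if_neg (by simp)] at hseq
        have e1 : (seq R hgen (n + 1)).1 = (seq R hgen n).1 := by rw [hseq]
        have e2 : (seq R hgen (n + 1)).2 = insert z (seq R hgen n).2 := by rw [hseq]
        have hF : (enum n).F ⊆ (seq R hgen n).1 ∧ 0 ≤ (enum n).u := h.2.2 hside
        have hz0 : 0 < z := lt_of_le_of_lt hF.2 hz1.1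
        have hnotF : ∀ w ∈ (seq R hgen n).2, w ∉ (enum n).F := by
          intro w hw hwF
          exact absurd (hI w (hF.1 hwF)) (not_lt.mpr (le_of_lt (hJ w hw)))
        rw [e1, e2]
        refine ⟨hI, ?_, hAI, ?_⟩
        · intro x hx
          rcases Finset.mem_insert.mp hx with rfl | hx
          exacts [hz0, hJ x hx]
        · intro x hx y hy
          rcases Finset.mem_insert.mp hx with hxz | hx <;>
            rcases Finset.mem_insert.mp hy with hyz | hy
          · rw [hxz, hyz]; exact hirr _
          · rw [hxz]; exact hz_not_old y (Finset.mem_union_right _ hy) (hnotF y hy)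
          · rw [hyz]
            exact fun hr => hz_not_old x (Finset.mem_union_right _ hx) (hnotF x hx) (hsymm hr)
          · exact hAJ x hx y hy
      · -- side = true : z added to I-part
        rw [hside, if_pos rfl] at hseq
        have e1 : (seq R hgen (n + 1)).1 = insert z (seq R hgen n).1 := by rw [hseq]
        have e2 : (seq R hgen (n + 1)).2 = (seq R hgen n).2 := by rw [hseq]
        have hF : (enum n).F ⊆ (seq R hgen n).2 ∧ (enum n).v ≤ 0 := h.2.1 hside
        have hz0 : z < 0 := lt_of_lt_of_le hz1.2 hF.2
        have hnotF : ∀ w ∈ (seq R hgen n).1, w ∉ (enum n).F := by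
          intro w hw hwF
          exact absurd (hJ w (hF.1 hwF)) (not_lt.mpr (le_of_lt (hI w hw)))
        rw [e1, e2]
        refine ⟨?_, hJ, ?_, hAJ⟩
        · intro x hx
          rcases Finset.mem_insert.mp hx with rfl | hx
          exacts [hz0, hI x hx]
        · intro x hx y hy
          rcases Finset.mem_insert.mp hx with hxz | hx <;>
            rcases Finset.mem_insert.mp hy with hyz | hy
          · rw [hxz, hyz]; exact hirr _
          · rw [hxz]; exact hz_not_old y (Finset.mem_union_left _ hy) (hnotF y hy)
          · rw [hyz]
            exact fun hr => hz_not_old x (Finset.mem_union_left _ hx) (hnotF x hx) (hsymm hr)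
          · exact hAI x hx y hy
    · have hseq : seq R hgen (n + 1) = seq R hgen n := by
        show step R hgen (enum n) (seq R hgen n) = _
        unfold step; rw [dif_neg h]
      rw [hseq]; exact ⟨hI, hJ, hAI, hAJ⟩

noncomputable def Iset (hgen : Gen R) : Set ℚ := {x | ∃ n, x ∈ (seq R hgen n).1}
noncomputable def Jset (hgen : Gen R) : Set ℚ := {x | ∃ n, x ∈ (seq R hgen n).2}

lemma finset_stage_J (hgen : Gen R) (S : Finset ℚ) (hS : ∀ x ∈ S, x ∈ Jset R hgen) :
    ∃ N, ∀ x ∈ S, x ∈ (seq R hgen N).2 := by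
  classical
  induction S using Finset.induction with
  | empty => exact ⟨0, by simp⟩
  | @insert a S ha ih =>
    obtain ⟨N₁, hN₁⟩ := ih (fun x hx => hS x (Finset.mem_insert_of_mem hx))
    obtain ⟨N₂, hN₂⟩ := hS a (Finset.mem_insert_self a S)
    refine ⟨max N₁ N₂, fun x hx => ?_⟩
    rcases Finset.mem_insert.mp hx with rfl | hx
    · exact (seq_mono R hgen (le_max_right N₁ N₂)).2 hN₂
    · exact (seq_mono R hgen (le_max_left N₁ N₂)).2 (hN₁ x hx)

lemma finset_stage_I (hgen : Gen R) (S : Finset ℚ) (hS : ∀ x ∈ S, x ∈ Iset R hgen) :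
    ∃ N, ∀ x ∈ S, x ∈ (seq R hgen N).1 := by
  classical
  induction S using Finset.induction with
  | empty => exact ⟨0, by simp⟩
  | @insert a S ha ih =>
    obtain ⟨N₁, hN₁⟩ := ih (fun x hx => hS x (Finset.mem_insert_of_mem hx))
    obtain ⟨N₂, hN₂⟩ := hS a (Finset.mem_insert_self a S)
    refine ⟨max N₁ N₂, fun x hx => ?_⟩
    rcases Finset.mem_insert.mp hx with rfl | hx
    · exact (seq_mono R hgen (le_max_right N₁ N₂)).1 hN₂
    · exact (seq_mono R hgen (le_max_left N₁ N₂)).1 (hN₁ x hx)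

/-- Key genericity lemma for the I-side. -/
lemma key_U (hgen : Gen R) (F G : Finset ℚ) (hFG : Disjoint F G)
    (hFJ : ∀ f ∈ F, f ∈ Jset R hgen) (hGJ : ∀ g ∈ G, g ∈ Jset R hgen)
    {u v : ℚ} (huv : u < v) (hv : v ≤ 0) :
    ∃ z ∈ Iset R hgen, (u < z ∧ z < v) ∧ (∀ f ∈ F, R z f) ∧ ∀ g ∈ G, ¬R z g := by
  classical
  obtain ⟨N, hN⟩ := finset_stage_J R hgen (F ∪ G) (by
    intro x hx; rcases Finset.mem_union.mp hx with h | h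
    exacts [hFJ x h, hGJ x h])
  obtain ⟨n, hnN, hn⟩ := enum_spec ⟨true, F, G, u, v⟩ N
  have happ : Applicable (enum n) (seq R hgen n) := by
    rw [hn]
    refine ⟨huv, fun _ => ⟨?_, hv⟩, by simp⟩
    intro f hf
    exact (seq_mono R hgen hnN).2 (hN f (Finset.mem_union_left _ hf))
  obtain ⟨z, hz1, hzF, hzC, hzR, hzNR, hstep⟩ := step_spec R hgen (enum n) (seq R hgen n) happ
  rw [hn] at hz1 hzR hzNR hstep
  refine ⟨z, ⟨n + 1, ?_⟩, hz1, hzR, ?_⟩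
  · have h1 : seq R hgen (n + 1) = step R hgen (enum n) (seq R hgen n) := rfl
    rw [h1, hn, hstep]
    simp
  · intro g hg
    exact hzNR g (Finset.mem_sdiff.mpr ⟨Finset.mem_union_right _ hg,
      Finset.disjoint_right.mp hFG hg⟩)

/-- Key genericity lemma for the J-side. -/
lemma key_V (hgen : Gen R) (F G : Finset ℚ) (hFG : Disjoint F G)
    (hFI : ∀ f ∈ F, f ∈ Iset R hgen) (hGI : ∀ g ∈ G, g ∈ Iset R hgen)
    {u v : ℚ} (huv : u < v) (hu : 0 ≤ u) :
    ∃ z ∈ Jset R hgen, (u < z ∧ z < v) ∧ (∀ f ∈ F, R z f) ∧ ∀ g ∈ G, ¬R z g := by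
  classical
  obtain ⟨N, hN⟩ := finset_stage_I R hgen (F ∪ G) (by
    intro x hx; rcases Finset.mem_union.mp hx with h | h
    exacts [hFI x h, hGI x h])
  obtain ⟨n, hnN, hn⟩ := enum_spec ⟨false, F, G, u, v⟩ N
  have happ : Applicable (enum n) (seq R hgen n) := by
    rw [hn]
    refine ⟨huv, by simp, fun _ => ⟨?_, hu⟩⟩
    intro f hf
    exact (seq_mono R hgen hnN).1 (hN f (Finset.mem_union_left _ hf))
  obtain ⟨z, hz1, hzF, hzC, hzR, hzNR, hstep⟩ := step_spec R hgen (enum n) (seq R hgen n) happ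
  rw [hn] at hz1 hzR hzNR hstep
  refine ⟨z, ⟨n + 1, ?_⟩, hz1, hzR, ?_⟩
  · have h1 : seq R hgen (n + 1) = step R hgen (enum n) (seq R hgen n) := rfl
    rw [h1, hn, hstep]
    simp
  · intro g hg
    exact hzNR g (Finset.mem_sdiff.mpr ⟨Finset.mem_union_right _ hg,
      Finset.disjoint_right.mp hFG hg⟩)

lemma Iset_neg (hgen : Gen R) (hsymm : Symmetric R) (hirr : Irreflexive R) :
    ∀ x ∈ Iset R hgen, x < 0 := by
  rintro x ⟨n, hn⟩
  exact (seq_inv R hgen hsymm hirr n).1 x hn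

lemma Jset_pos (hgen : Gen R) (hsymm : Symmetric R) (hirr : Irreflexive R) :
    ∀ x ∈ Jset R hgen, 0 < x := by
  rintro x ⟨n, hn⟩
  exact (seq_inv R hgen hsymm hirr n).2.1 x hn

lemma Iset_anti (hgen : Gen R) (hsymm : Symmetric R) (hirr : Irreflexive R) :
    ∀ x ∈ Iset R hgen, ∀ y ∈ Iset R hgen, ¬R x y := by
  rintro x ⟨n, hn⟩ y ⟨m, hm⟩
  exact (seq_inv R hgen hsymm hirr (max n m)).2.2.1 x
    ((seq_mono R hgen (le_max_left n m)).1 hn) y ((seq_mono R hgen (le_max_right n m)).1 hm)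

lemma Jset_anti (hgen : Gen R) (hsymm : Symmetric R) (hirr : Irreflexive R) :
    ∀ x ∈ Jset R hgen, ∀ y ∈ Jset R hgen, ¬R x y := by
  rintro x ⟨n, hn⟩ y ⟨m, hm⟩
  exact (seq_inv R hgen hsymm hirr (max n m)).2.2.2 x
    ((seq_mono R hgen (le_max_left n m)).2 hn) y ((seq_mono R hgen (le_max_right n m)).2 hm)

end RandOGAux

/-- Let `(ℚ; <, R)` be a model of the theory of the random ordered graph (`R`
symmetric, irreflexive, and generic). Then there are subsets `I < J` of `ℚ`, each of order
type `ℚ`, which are `R`-antichains, such that the induced ordered bipartite graph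
`(I, <; J, <; R ∩ (I × J))` is isomorphic to the random ordered bipartite graph `G*`. -/
theorem exists_bipartite_random_in_random_ordered_graph (R : ℚ → ℚ → Prop)
    (hsymm : Symmetric R) (hirr : Irreflexive R)
    (hgen : ∀ F G : Finset ℚ, Disjoint F G →
      DenseUnbounded {x : ℚ | x ∉ F ∧ x ∉ G ∧ (∀ f ∈ F, R x f) ∧ ∀ g ∈ G, ¬R x g}) :
    ∃ I J : Set ℚ, (∀ i ∈ I, ∀ j ∈ J, i < j) ∧
      Nonempty (I ≃o ℚ) ∧ Nonempty (J ≃o ℚ) ∧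
      (∀ i ∈ I, ∀ i' ∈ I, ¬R i i') ∧ (∀ j ∈ J, ∀ j' ∈ J, ¬R j j') ∧
      IsRandomOBG (fun (i : I) (j : J) => R i j) := by
  have hg : RandOGAux.Gen R := hgen
  set I := RandOGAux.Iset R hg with hIdef
  set J := RandOGAux.Jset R hg with hJdef
  have hIneg := RandOGAux.Iset_neg R hg hsymm hirr
  have hJpos := RandOGAux.Jset_pos R hg hsymm hirr
  have hIa := RandOGAux.Iset_anti R hg hsymm hirr
  have hJa := RandOGAux.Jset_anti R hg hsymm hirr
  have keyU := RandOGAux.key_U R hg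
  have keyV := RandOGAux.key_V R hg
  -- subtype-level genericity for the I-side
  have hU : ∀ (F G : Finset J), Disjoint F G → ∀ u v : ℚ, u < v → v ≤ 0 →
      ∃ z : I, u < (z : ℚ) ∧ (z : ℚ) < v ∧ (∀ f ∈ F, R z f) ∧ ∀ g ∈ G, ¬R z g := by
    intro F G hFG u v huv hv
    obtain ⟨z, hzI, hz1, hzR, hzN⟩ := keyU (F.map (Function.Embedding.subtype _))
      (G.map (Function.Embedding.subtype _))
      ((Finset.disjoint_map _).mpr hFG)
      (by rintro f hf; obtain ⟨⟨f, hfJ⟩, -, rfl⟩ := Finset.mem_map.mp hf; exact hfJ)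
      (by rintro g hgm; obtain ⟨⟨g, hgJ⟩, -, rfl⟩ := Finset.mem_map.mp hgm; exact hgJ)
      huv hv
    exact ⟨⟨z, hzI⟩, hz1.1, hz1.2,
      fun f hf => hzR f (Finset.mem_map.mpr ⟨f, hf, rfl⟩),
      fun g hgm => hzN g (Finset.mem_map.mpr ⟨g, hgm, rfl⟩)⟩
  -- subtype-level genericity for the J-side
  have hV : ∀ (F G : Finset I), Disjoint F G → ∀ u v : ℚ, u < v → 0 ≤ u →
      ∃ z : J, u < (z : ℚ) ∧ (z : ℚ) < v ∧ (∀ f ∈ F, R f z) ∧ ∀ g ∈ G, ¬R g z := by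
    intro F G hFG u v huv hu
    obtain ⟨z, hzJ, hz1, hzR, hzN⟩ := keyV (F.map (Function.Embedding.subtype _))
      (G.map (Function.Embedding.subtype _))
      ((Finset.disjoint_map _).mpr hFG)
      (by rintro f hf; obtain ⟨⟨f, hfI⟩, -, rfl⟩ := Finset.mem_map.mp hf; exact hfI)
      (by rintro g hgm; obtain ⟨⟨g, hgI⟩, -, rfl⟩ := Finset.mem_map.mp hgm; exact hgI)
      huv hu
    exact ⟨⟨z, hzJ⟩, hz1.1, hz1.2,
      fun f hf => hsymm (hzR f (Finset.mem_map.mpr ⟨f, hf, rfl⟩)),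
      fun g hgm hr => hzN g (Finset.mem_map.mpr ⟨g, hgm, rfl⟩) (hsymm hr)⟩
  haveI : Nonempty I := ⟨(hU ∅ ∅ (by simp) (-1) 0 (by norm_num) le_rfl).choose⟩
  haveI : Nonempty J := ⟨(hV ∅ ∅ (by simp) 0 1 (by norm_num) le_rfl).choose⟩
  haveI : DenselyOrdered I := ⟨fun a b hab => by
    obtain ⟨z, h1, h2, -, -⟩ := hU ∅ ∅ (by simp) a b (Subtype.coe_lt_coe.mpr hab)
      (le_of_lt (hIneg b b.2))
    exact ⟨z, Subtype.coe_lt_coe.mp h1, Subtype.coe_lt_coe.mp h2⟩⟩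
  haveI : NoMinOrder I := ⟨fun a => by
    obtain ⟨z, h1, h2, -, -⟩ := hU ∅ ∅ (by simp) ((a : ℚ) - 1) a (by linarith)
      (le_of_lt (hIneg a a.2))
    exact ⟨z, Subtype.coe_lt_coe.mp h2⟩⟩
  haveI : NoMaxOrder I := ⟨fun a => by
    obtain ⟨z, h1, h2, -, -⟩ := hU ∅ ∅ (by simp) a 0 (hIneg a a.2) le_rfl
    exact ⟨z, Subtype.coe_lt_coe.mp h1⟩⟩
  haveI : DenselyOrdered J := ⟨fun a b hab => by
    obtain ⟨z, h1, h2, -, -⟩ := hV ∅ ∅ (by simp) a b (Subtype.coe_lt_coe.mpr hab)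
      (le_of_lt (hJpos a a.2))
    exact ⟨z, Subtype.coe_lt_coe.mp h1, Subtype.coe_lt_coe.mp h2⟩⟩
  haveI : NoMinOrder J := ⟨fun a => by
    obtain ⟨z, h1, h2, -, -⟩ := hV ∅ ∅ (by simp) 0 a (hJpos a a.2) le_rfl
    exact ⟨z, Subtype.coe_lt_coe.mp h2⟩⟩
  haveI : NoMaxOrder J := ⟨fun a => by
    obtain ⟨z, h1, h2, -, -⟩ := hV ∅ ∅ (by simp) a ((a : ℚ) + 1) (by linarith)
      (le_of_lt (hJpos a a.2))
    exact ⟨z, Subtype.coe_lt_coe.mp h1⟩⟩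
  refine ⟨I, J, fun i hi j hj => (hIneg i hi).trans (hJpos j hj),
    Order.iso_of_countable_dense I ℚ, Order.iso_of_countable_dense J ℚ, hIa, hJa,
    inferInstance, inferInstance, inferInstance, inferInstance, ?_, ?_⟩
  · intro F G hFG
    refine ⟨?_, ?_, ?_⟩
    · intro x y hxy
      obtain ⟨z, h1, h2, hzR, hzN⟩ := hU F G hFG x y (Subtype.coe_lt_coe.mpr hxy)
        (le_of_lt (hIneg y y.2))
      exact ⟨z, ⟨hzR, hzN⟩, Subtype.coe_lt_coe.mp h1, Subtype.coe_lt_coe.mp h2⟩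
    · intro x
      obtain ⟨z, h1, h2, hzR, hzN⟩ := hU F G hFG ((x : ℚ) - 1) x (by linarith)
        (le_of_lt (hIneg x x.2))
      exact ⟨z, ⟨hzR, hzN⟩, Subtype.coe_lt_coe.mp h2⟩
    · intro x
      obtain ⟨z, h1, h2, hzR, hzN⟩ := hU F G hFG x 0 (hIneg x x.2) le_rfl
      exact ⟨z, ⟨hzR, hzN⟩, Subtype.coe_lt_coe.mp h1⟩
  · intro F G hFG
    refine ⟨?_, ?_, ?_⟩
    · intro x y hxy
      obtain ⟨z, h1, h2, hzR, hzN⟩ := hV F G hFG x y (Subtype.coe_lt_coe.mpr hxy)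
        (le_of_lt (hJpos x x.2))
      exact ⟨z, ⟨hzR, hzN⟩, Subtype.coe_lt_coe.mp h1, Subtype.coe_lt_coe.mp h2⟩
    · intro x
      obtain ⟨z, h1, h2, hzR, hzN⟩ := hV F G hFG 0 x (hJpos x x.2) le_rfl
      exact ⟨z, ⟨hzR, hzN⟩, Subtype.coe_lt_coe.mp h2⟩
    · intro x
      obtain ⟨z, h1, h2, hzR, hzN⟩ := hV F G hFG x ((x : ℚ) + 1) (by linarith)
        (le_of_lt (hJpos x x.2))
      exact ⟨z, ⟨hzR, hzN⟩, Subtype.coe_lt_coe.mp h1⟩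
end

section
/- Let T be a complete first-order theory, φ(x̄;ȳ) a formula, and (āᵢ, b̄ᵢ : i ∈ ℚ) an indiscernible sequence in a model M of T such that M ⊨ φ(āᵢ; b̄ⱼ) iff i < j. Write b̄₀ = b₀⁰⌢b̄'₀ where b₀⁰ is a single element. If the sequence (āᵢ : i ∈ ℚ \ {0}) is indiscernible over b₀⁰, then the formula ψ(x̄;ȳ') := φ(x̄; b₀⁰, ȳ') (with parameter b₀⁰ and |ȳ'| = |ȳ| − 1) has the order property: for every k ∈ ℚ \ {0} there exists a tuple b̄'ₖ in an elementary extension of M such that for all i ∈ ℚ \ {0} with i ≠ k, φ(āᵢ; b₀⁰, b̄'ₖ) holds iff i < k. -/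
open FirstOrder FirstOrder.Language

universe u v

/-- The variable relabeling realizing `ψ(x̄; ȳ') := φ(x̄; b₀⁰ ⌢ ȳ')`: the first `y`-variable
becomes the (single) parameter variable, the remaining `y`-variables form `ȳ'`. -/
def splitVar (mx ny : ℕ) : (Fin mx ⊕ Fin (ny + 1)) → ((Fin mx ⊕ Fin ny) ⊕ Fin 1) :=
  Sum.elim (fun x => Sum.inl (Sum.inl x))
    (Fin.cases (Sum.inr 0) (fun y => Sum.inl (Sum.inr y)))


section OPAux

open FirstOrder FirstOrder.Language

variable {L : FirstOrder.Language.{u, v}} {M : Type (max u v)} [L.Structure M] {mx ny : ℕ}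

/-- The variable relabeling for one conjunct of the pattern formula. -/
def OPvmap (r : ℕ) (l : Fin r) (mx ny : ℕ) :
    (Fin mx ⊕ Fin (ny + 1)) → ((Fin r × Fin mx ⊕ Fin 1) ⊕ Fin ny) :=
  Sum.elim (fun x => Sum.inl (Sum.inl (l, x)))
    (Fin.cases (Sum.inl (Sum.inr 0)) Sum.inr)

theorem OPcore (φ : L.Formula (Fin mx ⊕ Fin (ny + 1)))
    (a : ℚ → Fin mx → M) (b : ℚ → Fin (ny + 1) → M)
    (hord : ∀ i j : ℚ, φ.Realize (Sum.elim (a i) (b j)) ↔ i < j)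
    (hover : IsIndiscernibleOver (L := L) (fun i : {q : ℚ // q ≠ 0} => a i.1) {b 0 0})
    (k : ℚ) (S : Finset ℚ) (hS : ∀ i ∈ S, i ≠ 0 ∧ i ≠ k) :
    ∃ c : Fin ny → M, ∀ i ∈ S,
      (φ.Realize (Sum.elim (a i) (Fin.cases (b 0 0) c)) ↔ i < k) := by
  classical
  set r := S.card with hr
  let e : Fin r ≃o S := S.orderIsoOfFin rfl
  let I : Fin r → {q : ℚ // q ≠ 0} := fun l => ⟨(e l : ℚ), (hS _ (e l).2).1⟩
  let J : Fin r → {q : ℚ // q ≠ 0} := fun l => ⟨(e l : ℚ) - k, sub_ne_zero.mpr (hS _ (e l).2).2⟩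
  have hI : StrictMono I := fun l l' h => Subtype.mk_lt_mk.2 (e.strictMono h)
  have hJ : StrictMono J := fun l l' h =>
    Subtype.mk_lt_mk.2 (by
      have := e.strictMono h
      linarith [Subtype.coe_lt_coe.mpr this])
  let θ₀ : L.Formula ((Fin r × Fin mx ⊕ Fin 1) ⊕ Fin ny) :=
    BoundedFormula.iInf
      (fun l : Fin r => if (e l : ℚ) < k then φ.relabel (OPvmap r l mx ny)
        else (φ.relabel (OPvmap r l mx ny)).not)
  let θ : L.Formula (Fin r × Fin mx ⊕ Fin 1) :=
    Formula.iExs (Fin ny) θ₀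
  have hθ0 : ∀ w : ((Fin r × Fin mx ⊕ Fin 1) ⊕ Fin ny) → M,
      θ₀.Realize w ↔ ∀ l : Fin r, (φ.Realize (w ∘ OPvmap r l mx ny) ↔ (e l : ℚ) < k) := by
    intro w
    rw [show θ₀.Realize w ↔ BoundedFormula.Realize θ₀ w default from Iff.rfl,
      BoundedFormula.realize_iInf]
    refine forall_congr' fun l => ?_
    by_cases hlk : (e l : ℚ) < k
    · simp only [if_pos hlk, hlk, iff_true]
      exact Formula.realize_relabel
    · rw [if_neg hlk]
      simp only [hlk, iff_false]
      rw [show BoundedFormula.Realize (φ.relabel (OPvmap r l mx ny)).not w default ↔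
        ¬ BoundedFormula.Realize (φ.relabel (OPvmap r l mx ny)) w default from
        BoundedFormula.realize_not]
      exact not_congr Formula.realize_relabel
  have hθ : ∀ v : (Fin r × Fin mx ⊕ Fin 1) → M,
      θ.Realize v ↔ ∃ w : Fin ny → M, θ₀.Realize (Sum.elim v w) := by
    intro v
    rw [show θ.Realize v ↔ _ from Formula.realize_iExs]
  have hL : θ.Realize (Sum.elim
      (fun v : Fin r × Fin mx => (fun i : {q : ℚ // q ≠ 0} => a i.1) (J v.1) v.2)
      (fun _ : Fin 1 => b 0 0)) := by
    rw [hθ]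
    refine ⟨fun y => b 0 y.succ, ?_⟩
    rw [hθ0]
    intro l
    have hc : (Sum.elim (Sum.elim
        (fun v : Fin r × Fin mx => (fun i : {q : ℚ // q ≠ 0} => a i.1) (J v.1) v.2)
        (fun _ : Fin 1 => b 0 0)) (fun y => b 0 y.succ)) ∘ OPvmap r l mx ny
        = Sum.elim (a ((e l : ℚ) - k)) (b 0) := by
      funext x
      rcases x with x | y
      · rfl
      · induction y using Fin.cases with
        | zero => simp [OPvmap]
        | succ y' => simp [OPvmap]
    rw [hc, hord]
    constructor
    · intro h; linarith
    · intro h; linarith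
  have key := (hover r 1 J I hJ hI (fun _ => b 0 0) (fun _ => rfl) θ).mp hL
  rw [hθ] at key
  obtain ⟨c, hc⟩ := key
  rw [hθ0] at hc
  refine ⟨c, fun i0 hi0 => ?_⟩
  obtain ⟨l, hl⟩ : ∃ l : Fin r, (e l : ℚ) = i0 := ⟨e.symm ⟨i0, hi0⟩, by simp⟩
  have hcomp : (Sum.elim (Sum.elim
      (fun v : Fin r × Fin mx => (fun i : {q : ℚ // q ≠ 0} => a i.1) (I v.1) v.2)
      (fun _ : Fin 1 => b 0 0)) c) ∘ OPvmap r l mx ny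
      = Sum.elim (a i0) (Fin.cases (b 0 0) c) := by
    funext x
    rcases x with x | y
    · simp [OPvmap, I, hl]
    · induction y using Fin.cases with
      | zero => simp [OPvmap]
      | succ y' => simp [OPvmap]
  have := hc l
  rw [hcomp] at this
  rw [this, hl]

/-- The substitution of parameters and constants into `φ`. -/
def OPgmap (a : ℚ → Fin mx → M) (b : ℚ → Fin (ny + 1) → M) (k i : ℚ) :
    (Fin mx ⊕ Fin (ny + 1)) → (M ⊕ (ℚ × Fin ny)) :=
  Sum.elim (fun x => Sum.inl (a i x)) (Fin.cases (Sum.inl (b 0 0)) (fun y => Sum.inr (k, y)))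

/-- The sentence expressing the order pattern at `(k, i)`. -/
noncomputable def OPsig (φ : L.Formula (Fin mx ⊕ Fin (ny + 1))) (a : ℚ → Fin mx → M)
    (b : ℚ → Fin (ny + 1) → M) (k i : ℚ) : (L[[M ⊕ (ℚ × Fin ny)]]).Sentence :=
  if i < k then Formula.equivSentence (φ.relabel (OPgmap.{u,v} a b k i))
  else (Formula.equivSentence (φ.relabel (OPgmap.{u,v} a b k i))).not

/-- The theory consisting of the elementary diagram of `M` plus all the patterns. -/
noncomputable def OPtheory (φ : L.Formula (Fin mx ⊕ Fin (ny + 1))) (a : ℚ → Fin mx → M)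
    (b : ℚ → Fin (ny + 1) → M) : (L[[M ⊕ (ℚ × Fin ny)]]).Theory :=
  ((L.lhomWithConstantsMap (Sum.inl : M → M ⊕ (ℚ × Fin ny))).onTheory (L.elementaryDiagram M)) ∪
    {s | ∃ k i : ℚ, k ≠ 0 ∧ i ≠ 0 ∧ i ≠ k ∧ s = OPsig.{u,v} φ a b k i}

theorem OPsat [Nonempty M] (φ : L.Formula (Fin mx ⊕ Fin (ny + 1))) (a : ℚ → Fin mx → M)
    (b : ℚ → Fin (ny + 1) → M)
    (hord : ∀ i j : ℚ, φ.Realize (Sum.elim (a i) (b j)) ↔ i < j)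
    (hover : IsIndiscernibleOver (L := L) (fun i : {q : ℚ // q ≠ 0} => a i.1) {b 0 0}) :
    (OPtheory.{u,v} φ a b).IsSatisfiable := by
  rw [Theory.isSatisfiable_iff_isFinitelySatisfiable]
  intro T0 hT0
  classical
  let P : (L[[M ⊕ (ℚ × Fin ny)]]).Sentence → ℚ × ℚ → Prop := fun s p =>
    p.1 ≠ 0 ∧ p.2 ≠ 0 ∧ p.2 ≠ p.1 ∧ s = OPsig.{u,v} φ a b p.1 p.2
  let ch : (L[[M ⊕ (ℚ × Fin ny)]]).Sentence → Option (ℚ × ℚ) := fun s =>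
    if h : ∃ p, P s p then some h.choose else none
  have hch : ∀ s p, ch s = some p → P s p := by
    intro s p hp
    by_cases h : ∃ q, P s q
    · rw [show ch s = some h.choose from dif_pos h] at hp
      obtain rfl : h.choose = p := by injection hp
      exact h.choose_spec
    · rw [show ch s = none from dif_neg h] at hp; cases hp
  let pairs : Finset (ℚ × ℚ) := (T0.image ch).filterMap id (by
    intro o o' p h h'
    cases o <;> cases o' <;> simp_all)
  have hpairs : ∀ p ∈ pairs, ∃ s ∈ T0, ch s = some p := by
    intro p hp
    rw [Finset.mem_filterMap] at hp
    obtain ⟨o, ho, hop⟩ := hp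
    rw [Finset.mem_image] at ho
    obtain ⟨s, hs, rfl⟩ := ho
    exact ⟨s, hs, hop⟩
  let Sk : ℚ → Finset ℚ := fun k => (pairs.filter fun p => p.1 = k).image Prod.snd
  have hSk : ∀ k, ∀ i ∈ Sk k, i ≠ 0 ∧ i ≠ k := by
    intro k i hi
    simp only [Sk, Finset.mem_image, Finset.mem_filter] at hi
    obtain ⟨p, ⟨hp, rfl⟩, rfl⟩ := hi
    obtain ⟨s, hs, hcs⟩ := hpairs p hp
    have := hch s p hcs
    exact ⟨this.2.1, this.2.2.1⟩
  let cf : ℚ → Fin ny → M := fun k =>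
    (OPcore.{u,v} φ a b hord hover k (Sk k) (hSk k)).choose
  have hcf : ∀ k, ∀ i ∈ Sk k,
      (φ.Realize (Sum.elim (a i) (Fin.cases (b 0 0) (cf k))) ↔ i < k) := fun k =>
    (OPcore.{u,v} φ a b hord hover k (Sk k) (hSk k)).choose_spec
  letI cS : (constantsOn (M ⊕ (ℚ × Fin ny))).Structure M :=
    constantsOn.structure (Sum.elim id (fun p => cf p.1 p.2))
  haveI hexp0 : (LHom.constantsOnMap (Sum.inl : M → M ⊕ (ℚ × Fin ny))).IsExpansionOn M :=
    constantsOnMap_isExpansionOn rfl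
  haveI hexp : (L.lhomWithConstantsMap (Sum.inl : M → M ⊕ (ℚ × Fin ny))).IsExpansionOn M :=
    LHom.sumMap_isExpansionOn _ _ _
  haveI : M ⊨ (↑T0 : (L[[M ⊕ (ℚ × Fin ny)]]).Theory) := by
    rw [Theory.model_iff]
    intro s hs
    rcases hT0 hs with h | h
    · obtain ⟨s0, hs0, rfl⟩ := h
      rw [LHom.realize_onSentence]
      exact mem_completeTheory.mp hs0
    · obtain ⟨k, i, hk, hi, hik, rfl⟩ := h
      have hex : ∃ p, P (OPsig.{u,v} φ a b k i) p := ⟨(k, i), hk, hi, hik, rfl⟩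
      have hchs : ch (OPsig.{u,v} φ a b k i) = some hex.choose := dif_pos hex
      obtain ⟨hk', hi', hik', hs'⟩ := hex.choose_spec
      have hmem : hex.choose ∈ pairs := by
        rw [Finset.mem_filterMap]
        refine ⟨ch (OPsig.{u,v} φ a b k i), Finset.mem_image_of_mem _ hs, ?_⟩
        exact hchs
      have hSkmem : hex.choose.2 ∈ Sk hex.choose.1 := by
        simp only [Sk, Finset.mem_image, Finset.mem_filter]
        exact ⟨hex.choose, ⟨hmem, rfl⟩, rfl⟩
      have hreal : (Formula.equivSentence
          (φ.relabel (OPgmap.{u,v} a b hex.choose.1 hex.choose.2))).Realize M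
          ↔ hex.choose.2 < hex.choose.1 := by
        rw [Formula.realize_equivSentence, Formula.realize_relabel]
        have hcmp : ((fun a' => (L.con a' : M)) ∘ OPgmap.{u,v} a b hex.choose.1 hex.choose.2)
            = Sum.elim (a hex.choose.2) (Fin.cases (b 0 0) (cf hex.choose.1)) := by
          funext x
          rcases x with x | y
          · rfl
          · induction y using Fin.cases with
            | zero => simp only [OPgmap, Function.comp_apply, Sum.elim_inr, Fin.cases_zero]; try rfl
            | succ y' => simp only [OPgmap, Function.comp_apply, Sum.elim_inr, Fin.cases_succ]; try rfl
        rw [hcmp]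
        exact hcf _ _ hSkmem
      rw [hs']
      by_cases h : hex.choose.2 < hex.choose.1
      · rw [show OPsig.{u,v} φ a b hex.choose.1 hex.choose.2 = Formula.equivSentence
          (φ.relabel (OPgmap.{u,v} a b hex.choose.1 hex.choose.2)) from if_pos h]
        exact hreal.mpr h
      · rw [show OPsig.{u,v} φ a b hex.choose.1 hex.choose.2 = (Formula.equivSentence
          (φ.relabel (OPgmap.{u,v} a b hex.choose.1 hex.choose.2))).not from if_neg h]
        exact fun hr => h (hreal.mp hr)
  exact Theory.Model.isSatisfiable M

end OPAux

/-- Given an indiscernible sequence `(āᵢ, b̄ᵢ : i ∈ ℚ)` with `φ(āᵢ; b̄ⱼ)` iff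
`i < j`, write `b̄₀ = b₀⁰ ⌢ b̄'₀`. If `(āᵢ : i ∈ ℚ \ {0})` is indiscernible over `b₀⁰`, then
`ψ(x̄; ȳ') := φ(x̄; b₀⁰, ȳ')` has the order property; indeed for every `k ≠ 0` there is a
tuple `b̄'ₖ` in an elementary extension of `M` such that for all `i ∈ ℚ \ {0}` with `i ≠ k`,
`φ(āᵢ; b₀⁰, b̄'ₖ)` holds iff `i < k`. -/
theorem order_property_of_indiscernible_over_first_coordinate
    {L : FirstOrder.Language.{u, v}} (T : L.Theory) (hT : T.IsComplete)
    (M : Type (max u v)) [L.Structure M] [Nonempty M] (hM : M ⊨ T)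
    {mx ny : ℕ} (φ : L.Formula (Fin mx ⊕ Fin (ny + 1)))
    (a : ℚ → Fin mx → M) (b : ℚ → Fin (ny + 1) → M)
    (hind : IsIndiscernible (L := L) (fun i : ℚ => Sum.elim (a i) (b i)))
    (hord : ∀ i j : ℚ, φ.Realize (Sum.elim (a i) (b j)) ↔ i < j)
    (hover : IsIndiscernibleOver (L := L) (fun i : {q : ℚ // q ≠ 0} => a i.1) {b 0 0}) :
    HasOPWithParams (φ.relabel (splitVar mx ny)) (fun _ : Fin 1 => b 0 0) ∧
      ∃ N : ElemExt L M, ∀ k : ℚ, k ≠ 0 → ∃ bk : Fin ny → N.carrier,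
        ∀ i : ℚ, i ≠ 0 → i ≠ k →
          (φ.Realize (Sum.elim (fun x => N.emb (a i x)) (Fin.cases (N.emb (b 0 0)) bk)) ↔
            i < k) := by
  classical
  obtain ⟨N0⟩ := OPsat.{u,v} φ a b hord hover
  letI SL : L.Structure N0.Carrier :=
    (L.lhomWithConstants (M ⊕ (ℚ × Fin ny))).reduct N0.Carrier
  letI SLM : (L[[M]]).Structure N0.Carrier :=
    (L.lhomWithConstantsMap (Sum.inl : M → M ⊕ (ℚ × Fin ny))).reduct N0.Carrier
  haveI h2 : (L.lhomWithConstants M).IsExpansionOn N0.Carrier :=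
    ⟨fun _ _ => rfl, fun _ _ => rfl⟩
  haveI h4 : (L.lhomWithConstants (M ⊕ (ℚ × Fin ny))).IsExpansionOn N0.Carrier :=
    ⟨fun _ _ => rfl, fun _ _ => rfl⟩
  haveI h3 : N0.Carrier ⊨ L.elementaryDiagram M := by
    rw [← LHom.onTheory_model (L.lhomWithConstantsMap (Sum.inl : M → M ⊕ (ℚ × Fin ny)))]
    exact N0.is_model.mono Set.subset_union_left
  let emb : M ↪ₑ[L] N0.Carrier := ElementaryEmbedding.ofModelsElementaryDiagram L M N0.Carrier
  let NE : ElemExt L M := ⟨N0.Carrier, emb⟩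
  have part2 : ∀ k : ℚ, k ≠ 0 → ∃ bk : Fin ny → N0.Carrier,
      ∀ i : ℚ, i ≠ 0 → i ≠ k →
        (φ.Realize (Sum.elim (fun x => emb (a i x)) (Fin.cases (emb (b 0 0)) bk)) ↔ i < k) := by
    intro k hk
    refine ⟨fun y => ((L.con (Sum.inr (k, y)) : (L[[M ⊕ (ℚ × Fin ny)]]).Constants) :
      N0.Carrier), ?_⟩
    intro i hi hik
    have hmem : OPsig.{u,v} φ a b k i ∈ OPtheory.{u,v} φ a b := Or.inr ⟨k, i, hk, hi, hik, rfl⟩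
    have hreal := (OPtheory.{u,v} φ a b).realize_sentence_of_mem (M := N0.Carrier) hmem
    have hcmp : ((fun a' => (L.con a' : N0.Carrier)) ∘ OPgmap.{u,v} a b k i)
        = Sum.elim (fun x => emb (a i x)) (Fin.cases (emb (b 0 0))
            (fun y => ((L.con (Sum.inr (k, y)) : (L[[M ⊕ (ℚ × Fin ny)]]).Constants) :
              N0.Carrier))) := by
      funext x
      rcases x with x | y
      · rfl
      · induction y using Fin.cases with
        | zero => simp only [OPgmap, Function.comp_apply, Sum.elim_inr, Fin.cases_zero]; try rfl
        | succ y' => simp only [OPgmap, Function.comp_apply, Sum.elim_inr, Fin.cases_succ]; try rfl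
    by_cases h : i < k
    · rw [show OPsig.{u,v} φ a b k i = Formula.equivSentence (φ.relabel (OPgmap.{u,v} a b k i)) from
        if_pos h] at hreal
      rw [Formula.realize_equivSentence, Formula.realize_relabel, hcmp] at hreal
      exact iff_of_true hreal h
    · rw [show OPsig.{u,v} φ a b k i = (Formula.equivSentence (φ.relabel (OPgmap.{u,v} a b k i))).not from
        if_neg h] at hreal
      rw [Sentence.realize_not, Formula.realize_equivSentence, Formula.realize_relabel,
        hcmp] at hreal
      exact iff_of_false hreal h
  constructor
  · refine ⟨NE, fun i => fun x => emb (a ((i : ℚ) + 1) x),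
      fun j => (part2 ((j : ℚ) + 1/2) (by positivity)).choose, fun i j => ?_⟩
    have hne : ((i : ℚ) + 1) ≠ ((j : ℚ) + 1/2) := by
      intro h
      have h2 : ((2*i+2 : ℕ) : ℚ) = ((2*j+1 : ℕ) : ℚ) := by push_cast; linarith
      have := Nat.cast_inj.mp h2
      omega
    have hspec := (part2 ((j : ℚ) + 1/2) (by positivity)).choose_spec ((i : ℚ) + 1)
      (by positivity) hne
    rw [Formula.realize_relabel]
    have hcmp : (Sum.elim (Sum.elim (fun x => emb (a ((i : ℚ) + 1) x))
        ((part2 ((j : ℚ) + 1/2) (by positivity)).choose)) (NE.emb ∘ fun _ : Fin 1 => b 0 0))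
        ∘ splitVar mx ny
        = Sum.elim (fun x => emb (a ((i : ℚ) + 1) x))
            (Fin.cases (emb (b 0 0)) (part2 ((j : ℚ) + 1/2) (by positivity)).choose) := by
      funext x
      rcases x with x | y
      · rfl
      · induction y using Fin.cases with
        | zero => simp [splitVar]; rfl
        | succ y' => simp [splitVar]
    rw [hcmp, hspec]
    constructor
    · intro h
      have : (i : ℚ) < (j : ℚ) := by linarith
      exact_mod_cast this
    · intro h
      have : (i : ℚ) + 1 ≤ (j : ℚ) := by exact_mod_cast Nat.succ_le_of_lt h
      linarith
  · exact ⟨NE, part2⟩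
end

section
/- Let T be a complete first-order theory, φ(x̄;ȳ) a formula, and (āᵢ, b̄ᵢ : i ∈ ℚ) an indiscernible sequence in a model M of T such that M ⊨ φ(āᵢ; b̄ⱼ) iff i < j. Write b̄₀ = b₀⁰⌢b̄'₀ where b₀⁰ is a single element, and set ℚ* = ℚ \ {0}. If the sequence (āᵢ : i ∈ ℚ*) is NOT indiscernible over b₀⁰, then there is a formula ψ(x̄; y), where y is a single variable and ψ has parameters from {āᵢ : i ∈ ℚ*}, which has the order property. -/
open FirstOrder FirstOrder.Language

universe u v

/-! ### Auxiliary machinery for the proof -/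

section OP12Aux

variable {L : FirstOrder.Language.{u, v}} {M : Type (max u v)} [L.Structure M]

@[simp] lemma OP12.val_mk {n m : ℕ} (h : m < n) : ((⟨m, h⟩ : Fin n) : ℕ) = m := rfl

/-- The skip function: `skOP e k` is `k` if `k < e` and `k+1` otherwise. -/
def skOP {n : ℕ} (e : Fin (n + 1)) (k : Fin n) : Fin (n + 1) :=
  ⟨if (k : ℕ) < (e : ℕ) then (k : ℕ) else (k : ℕ) + 1, by have := k.isLt; split <;> omega⟩

@[simp] lemma skOP_val {n : ℕ} (e : Fin (n + 1)) (k : Fin n) :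
    ((skOP e k : Fin (n + 1)) : ℕ) = if (k : ℕ) < (e : ℕ) then (k : ℕ) else (k : ℕ) + 1 := rfl

/-- Canonical increasing tuple avoiding `0` with exactly `e` negative entries. -/
def tauT (n e : ℕ) : Fin n → ℚ := fun k =>
  if (k : ℕ) < e then ((k : ℕ) : ℚ) - e else ((k : ℕ) : ℚ) - e + 1

/-- Canonical increasing tuple with a free value `r` at slot `d`. -/
def sigT (n d : ℕ) (r : ℚ) : Fin n → ℚ := fun k =>
  if (k : ℕ) < d then ((k : ℕ) : ℚ) - d - 1
  else if (k : ℕ) < d + 1 then r else ((k : ℕ) : ℚ) - d + 1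

/-- Realization of `χ` at the `a`-tuples indexed by `t` and the single element `b u 0`. -/
def PredOP {mx nb n : ℕ} (a : ℚ → Fin mx → M) (b : ℚ → Fin (nb + 1) → M)
    (χ : L.Formula (Fin n × Fin mx ⊕ Fin 1)) (t : Fin n → ℚ) (u : ℚ) : Prop :=
  χ.Realize (Sum.elim (fun v : Fin n × Fin mx => a (t v.1) v.2) (fun _ : Fin 1 => b u 0))

/-- The relabeling merging the `n` a-slots and the single b-slot into `n+1` slots. -/
def rhoOP (n mx nb : ℕ) (e : Fin (n + 1)) :
    (Fin n × Fin mx ⊕ Fin 1) → ((Fin (n + 1) × (Fin mx ⊕ Fin (nb + 1))) ⊕ Fin 0) :=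
  Sum.elim (fun v => Sum.inl (skOP e v.1, Sum.inl v.2)) (fun _ => Sum.inl (e, Sum.inr 0))

lemma aux_merge {mx nb : ℕ} {a : ℚ → Fin mx → M} {b : ℚ → Fin (nb + 1) → M}
    (hind : IsIndiscernible (L := L) (fun i : ℚ => Sum.elim (a i) (b i)))
    {n : ℕ} (χ : L.Formula (Fin n × Fin mx ⊕ Fin 1)) (e : Fin (n + 1))
    (s s' : Fin (n + 1) → ℚ) (hs : StrictMono s) (hs' : StrictMono s')
    (t t' : Fin n → ℚ) (u u' : ℚ)
    (hts : ∀ k, s (skOP e k) = t k) (hus : s e = u)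
    (hts' : ∀ k, s' (skOP e k) = t' k) (hus' : s' e = u') :
    (PredOP a b χ t u ↔ PredOP a b χ t' u') := by
  have ht : t = fun k => s (skOP e k) := funext fun k => (hts k).symm
  have ht' : t' = fun k => s' (skOP e k) := funext fun k => (hts' k).symm
  subst ht ht' hus hus'
  have key : ∀ θ : L.Formula (Fin (n + 1) × (Fin mx ⊕ Fin (nb + 1)) ⊕ Fin 0),
      (θ.Realize (Sum.elim (fun v : Fin (n + 1) × (Fin mx ⊕ Fin (nb + 1)) =>
          Sum.elim (a (s v.1)) (b (s v.1)) v.2) (fun l : Fin 0 => l.elim0)) ↔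
       θ.Realize (Sum.elim (fun v : Fin (n + 1) × (Fin mx ⊕ Fin (nb + 1)) =>
          Sum.elim (a (s' v.1)) (b (s' v.1)) v.2) (fun l : Fin 0 => l.elim0))) :=
    fun θ => hind (n + 1) 0 s s' hs hs' (fun l => l.elim0) (fun l => l.elim0) θ
  have h := key (χ.relabel (rhoOP n mx nb e))
  rw [Formula.realize_relabel, Formula.realize_relabel] at h
  have hfun : ∀ s₀ : Fin (n + 1) → ℚ,
      ((Sum.elim (fun v : Fin (n + 1) × (Fin mx ⊕ Fin (nb + 1)) =>
          Sum.elim (a (s₀ v.1)) (b (s₀ v.1)) v.2) (fun l : Fin 0 => l.elim0)) ∘ (rhoOP n mx nb e))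
      = Sum.elim (fun v : Fin n × Fin mx => a (s₀ (skOP e v.1)) v.2)
          (fun _ : Fin 1 => b (s₀ e) 0) := by
    intro s₀; funext v; rcases v with ⟨k, x⟩ | l <;> rfl
  rw [hfun s, hfun s'] at h
  exact h

lemma exists_cut {n : ℕ} (i : Fin n → ℚ) (hi : StrictMono i) :
    ∃ e : Fin (n + 1), ∀ k : Fin n, ((k : ℕ) < (e : ℕ) ↔ i k < 0) := by
  classical
  have hcard : (Finset.univ.filter fun k : Fin n => i k < 0).card ≤ n := by
    calc (Finset.univ.filter fun k : Fin n => i k < 0).card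
        ≤ Finset.univ.card := Finset.card_filter_le _ _
      _ = n := by simp
  refine ⟨⟨_, Nat.lt_succ_of_le hcard⟩, fun k => ⟨fun hk => ?_, fun hk => ?_⟩⟩
  · by_contra hneg
    push_neg at hneg
    have hsub : (Finset.univ.filter fun l : Fin n => i l < 0) ⊆ Finset.Iio k := by
      intro l hl
      simp only [Finset.mem_filter, Finset.mem_univ, true_and] at hl
      rw [Finset.mem_Iio]
      by_contra hlk
      push_neg at hlk
      exact absurd hl (not_lt.mpr (le_trans hneg (hi.monotone hlk)))
    have hle := Finset.card_le_card hsub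
    rw [Fin.card_Iio] at hle
    simp only [OP12.val_mk] at hk
    omega
  · have hsub : Finset.Iic k ⊆ Finset.univ.filter fun l : Fin n => i l < 0 := by
      intro l hl
      rw [Finset.mem_Iic] at hl
      simp only [Finset.mem_filter, Finset.mem_univ, true_and]
      exact lt_of_le_of_lt (hi.monotone hl) hk
    have hle := Finset.card_le_card hsub
    rw [Fin.card_Iic] at hle
    simp only [OP12.val_mk]
    omega

/-- Merging a strictly monotone nonvanishing tuple with the value `0`. -/
def sMerge {n : ℕ} (i : Fin n → ℚ) (e : Fin (n + 1)) : Fin (n + 1) → ℚ := fun l =>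
  if h : (l : ℕ) < (e : ℕ) then
    i ⟨(l : ℕ), by have := e.isLt; omega⟩
  else if h2 : (l : ℕ) = (e : ℕ) then 0
  else i ⟨(l : ℕ) - 1, by have := l.isLt; omega⟩

lemma exists_merge {n : ℕ} (i : Fin n → ℚ) (hi : StrictMono i) (hnz : ∀ k, i k ≠ 0) :
    ∃ (e : Fin (n + 1)) (s : Fin (n + 1) → ℚ),
      StrictMono s ∧ (∀ k, s (skOP e k) = i k) ∧ s e = 0 := by
  classical
  obtain ⟨e, he⟩ := exists_cut i hi
  refine ⟨e, sMerge i e, ?_, ?_, ?_⟩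
  · intro l1 l2 hl
    have h12 : (l1 : ℕ) < (l2 : ℕ) := hl
    simp only [sMerge]
    split_ifs
    all_goals try (exfalso; omega)
    all_goals first
      | (exact hi (Fin.mk_lt_mk.mpr (by omega)))
      | (exact (he _).mp (by simp only [OP12.val_mk]; omega))
      | (refine lt_of_le_of_ne (not_lt.mp fun hlt => ?_) (Ne.symm (hnz _));
         have hx := (he _).mpr hlt; simp only [OP12.val_mk] at hx; omega)
  · intro k
    by_cases hk : (k : ℕ) < (e : ℕ)
    · have h1 : skOP e k = ⟨(k : ℕ), by omega⟩ := Fin.ext (by simp [skOP_val, hk])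
      rw [h1]
      simp only [sMerge, OP12.val_mk]
      exact (dif_pos hk).trans (congrArg i (Fin.ext rfl))
    · have h1 : skOP e k = ⟨(k : ℕ) + 1, by have := k.isLt; omega⟩ :=
        Fin.ext (by simp [skOP_val, hk])
      rw [h1]
      simp only [sMerge, OP12.val_mk]
      exact (dif_neg (by omega)).trans ((dif_neg (by omega)).trans
        (congrArg i (Fin.ext (by simp only [OP12.val_mk]; omega))))
  · simp [sMerge]

/-- The linear merge tuple. -/
def sLin (n : ℕ) (c : ℚ) : Fin (n + 1) → ℚ := fun l => ((l : ℕ) : ℚ) - c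

lemma sLin_mono (n : ℕ) (c : ℚ) : StrictMono (sLin n c) := by
  intro l1 l2 hl
  have h12 : (l1 : ℕ) < (l2 : ℕ) := hl
  simp only [sLin]
  have : ((l1 : ℕ) : ℚ) < ((l2 : ℕ) : ℚ) := by exact_mod_cast h12
  linarith

/-- The merge tuple with values `r < u` in the middle gap. -/
def sA (n d : ℕ) (r u : ℚ) : Fin (n + 1) → ℚ := fun l =>
  if (l : ℕ) < d then ((l : ℕ) : ℚ) - d - 1
  else if (l : ℕ) < d + 1 then r
  else if (l : ℕ) < d + 2 then u
  else ((l : ℕ) : ℚ) - d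

lemma sA_mono (n d : ℕ) (r u : ℚ) (hr : -2 < r) (hru : r < u) (hu : u < 2) :
    StrictMono (sA n d r u) := by
  intro l1 l2 hl
  have h12 : (l1 : ℕ) < (l2 : ℕ) := hl
  clear hl
  simp only [sA]
  split_ifs
  all_goals try (exfalso; omega)
  all_goals (simp only [not_lt, Nat.lt_iff_add_one_le, not_le] at *; qify at *; linarith)

lemma predA {mx nb : ℕ} {a : ℚ → Fin mx → M} {b : ℚ → Fin (nb + 1) → M}
    (hind : IsIndiscernible (L := L) (fun i : ℚ => Sum.elim (a i) (b i)))
    {n : ℕ} (χ : L.Formula (Fin n × Fin mx ⊕ Fin 1)) (d : ℕ) (hd : d < n)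
    (r u : ℚ) (hr : -2 < r) (hru : r < u) (hu : u < 2) :
    (PredOP a b χ (sigT n d r) u ↔ PredOP a b χ (tauT n (d + 1)) 0) := by
  refine aux_merge hind χ ⟨d + 1, by omega⟩ (sA n d r u) (sLin n (d + 1))
    (sA_mono n d r u hr hru hu) (sLin_mono n (d + 1)) _ _ _ _ ?_ ?_ ?_ ?_
  · intro k
    by_cases hk : (k : ℕ) < d + 1
    · have h1 : skOP (⟨d + 1, by omega⟩ : Fin (n + 1)) k = ⟨(k : ℕ), by have := k.isLt; omega⟩ :=
        Fin.ext (by simp [skOP_val, OP12.val_mk, hk])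
      rw [h1]
      simp only [sA, sigT, OP12.val_mk]
      split_ifs <;> first | rfl | (exfalso; omega) | (push_cast; ring)
    · have h1 : skOP (⟨d + 1, by omega⟩ : Fin (n + 1)) k = ⟨(k : ℕ) + 1, by have := k.isLt; omega⟩ :=
        Fin.ext (by simp [skOP_val, OP12.val_mk, hk])
      rw [h1]
      simp only [sA, sigT, OP12.val_mk]
      split_ifs <;> first | rfl | (exfalso; omega) | (push_cast; ring)
  · simp only [sA, OP12.val_mk]
    rw [if_neg (by omega), if_neg (by omega), if_pos (by omega)]
  · intro k
    simp only [sLin, tauT, skOP_val, OP12.val_mk]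
    split_ifs <;> (push_cast; ring)
  · simp only [sLin, OP12.val_mk]
    push_cast; ring

lemma predB {mx nb : ℕ} {a : ℚ → Fin mx → M} {b : ℚ → Fin (nb + 1) → M}
    (hind : IsIndiscernible (L := L) (fun i : ℚ => Sum.elim (a i) (b i)))
    {n : ℕ} (χ : L.Formula (Fin n × Fin mx ⊕ Fin 1)) (d : ℕ) (hd : d < n)
    (r u : ℚ) (hu2 : -2 < u) (hur : u < r) (hr2 : r < 2) :
    (PredOP a b χ (sigT n d r) u ↔ PredOP a b χ (tauT n d) 0) := by
  refine aux_merge hind χ ⟨d, by omega⟩ (sA n d u r) (sLin n d)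
    (sA_mono n d u r hu2 hur hr2) (sLin_mono n d) _ _ _ _ ?_ ?_ ?_ ?_
  · intro k
    by_cases hk : (k : ℕ) < d
    · have h1 : skOP (⟨d, by omega⟩ : Fin (n + 1)) k = ⟨(k : ℕ), by have := k.isLt; omega⟩ :=
        Fin.ext (by simp [skOP_val, OP12.val_mk, hk])
      rw [h1]
      simp only [sA, sigT, OP12.val_mk]
      split_ifs <;> first | rfl | (exfalso; omega) | (push_cast; ring)
    · have h1 : skOP (⟨d, by omega⟩ : Fin (n + 1)) k = ⟨(k : ℕ) + 1, by have := k.isLt; omega⟩ :=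
        Fin.ext (by simp [skOP_val, OP12.val_mk, hk])
      rw [h1]
      simp only [sA, sigT, OP12.val_mk]
      split_ifs <;> first | rfl | (exfalso; omega) | (push_cast; ring)
  · simp only [sA, OP12.val_mk]
    rw [if_neg (by omega), if_pos (by omega)]
  · intro k
    simp only [sLin, tauT, skOP_val, OP12.val_mk]
    split_ifs <;> (push_cast; ring)
  · simp only [sLin, OP12.val_mk]
    push_cast; ring

/-- The relabeling extracting slot `d` as free variables and packing the rest as parameters. -/
def rpsiOP (n mx d : ℕ) : (Fin n × Fin mx ⊕ Fin 1) → ((Fin mx ⊕ Fin 1) ⊕ Fin (n * mx)) :=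
  Sum.elim
    (fun v => if (v.1 : ℕ) = d then Sum.inl (Sum.inl v.2) else Sum.inr (finProdFinEquiv v))
    (fun _ => Sum.inl (Sum.inr 0))

/-- The parameter tuple. -/
def cparOP {N : Type*} {mx : ℕ} (a : ℚ → Fin mx → N) (n d : ℕ) : Fin (n * mx) → N :=
  fun l => a (sigT n d 37 (finProdFinEquiv.symm l).1) (finProdFinEquiv.symm l).2

lemma realize_psi {mx nb : ℕ} {a : ℚ → Fin mx → M} {b : ℚ → Fin (nb + 1) → M} {n : ℕ}
    (χ : L.Formula (Fin n × Fin mx ⊕ Fin 1)) (d : ℕ) (r u : ℚ)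
    (W : Fin (n * mx) → M) (hW : W = cparOP a n d) :
    ((χ.relabel (rpsiOP n mx d)).Realize
        (Sum.elim (Sum.elim (a r) (fun _ : Fin 1 => b u 0)) W) ↔
      PredOP a b χ (sigT n d r) u) := by
  subst hW
  rw [Formula.realize_relabel]
  have h : (Sum.elim (Sum.elim (a r) (fun _ : Fin 1 => b u 0)) (cparOP a n d)) ∘ (rpsiOP n mx d)
      = Sum.elim (fun v : Fin n × Fin mx => a (sigT n d r v.1) v.2) (fun _ : Fin 1 => b u 0) := by
    funext v
    rcases v with ⟨k, x⟩ | l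
    · by_cases hk : (k : ℕ) = d
      · simp only [Function.comp_apply, rpsiOP, Sum.elim_inl, if_pos hk, sigT]
        rw [if_neg (by omega), if_pos (by omega)]
      · simp only [Function.comp_apply, rpsiOP, Sum.elim_inl, if_neg hk, Sum.elim_inr, cparOP,
          Equiv.symm_apply_apply]
        have hsig : sigT n d 37 k = sigT n d r k := by
          simp only [sigT]; split_ifs <;> first | rfl | (exfalso; omega)
        rw [hsig]
    · rfl
  exact Iff.of_eq (congrArg (fun w : (Fin n × Fin mx ⊕ Fin 1) → M => Formula.Realize χ w) h)

lemma frac_lt2 (x : ℕ) : (1 : ℚ) / (2 * (x : ℚ) + 2) < 2 := by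
  rw [div_lt_iff₀ (by positivity)]
  have : (0 : ℚ) ≤ x := Nat.cast_nonneg x
  linarith

lemma frac_lt2' (x : ℕ) : (1 : ℚ) / (2 * (x : ℚ) + 1) < 2 := by
  rw [div_lt_iff₀ (by positivity)]
  have : (0 : ℚ) ≤ x := Nat.cast_nonneg x
  linarith

lemma frac_pos (x : ℕ) : 0 < (1 : ℚ) / (2 * (x : ℚ) + 2) := by positivity

lemma frac_pos' (x : ℕ) : 0 < (1 : ℚ) / (2 * (x : ℚ) + 1) := by positivity

lemma frac_ij {i j : ℕ} (h : i < j) :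
    (1 : ℚ) / (2 * (j : ℚ) + 1) < 1 / (2 * (i : ℚ) + 2) := by
  rw [div_lt_div_iff₀ (by positivity) (by positivity)]
  have : (i : ℚ) + 1 ≤ j := by exact_mod_cast h
  linarith

lemma frac_ji {i j : ℕ} (h : j ≤ i) :
    (1 : ℚ) / (2 * (i : ℚ) + 2) < 1 / (2 * (j : ℚ) + 1) := by
  rw [div_lt_div_iff₀ (by positivity) (by positivity)]
  have : (j : ℚ) ≤ i := by exact_mod_cast h
  linarith

end OP12Aux

/-- Given an indiscernible sequence `(āᵢ, b̄ᵢ : i ∈ ℚ)` with `φ(āᵢ; b̄ⱼ)` iff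
`i < j`, write `b̄₀ = b₀⁰ ⌢ b̄'₀` and `ℚ* = ℚ \ {0}`. If `(āᵢ : i ∈ ℚ*)` is NOT indiscernible
over `b₀⁰`, then some formula `ψ(x̄; y)`, with `y` a single variable and parameters from
`{āᵢ : i ∈ ℚ*}`, has the order property. -/
theorem order_property_of_not_indiscernible_over_first_coordinate
    {L : FirstOrder.Language.{u, v}} (T : L.Theory) (hT : T.IsComplete)
    (M : Type (max u v)) [L.Structure M] [Nonempty M] (hM : M ⊨ T)
    {mx ny : ℕ} (φ : L.Formula (Fin mx ⊕ Fin (ny + 1)))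
    (a : ℚ → Fin mx → M) (b : ℚ → Fin (ny + 1) → M)
    (hind : IsIndiscernible (L := L) (fun i : ℚ => Sum.elim (a i) (b i)))
    (hord : ∀ i j : ℚ, φ.Realize (Sum.elim (a i) (b j)) ↔ i < j)
    (hnover : ¬ IsIndiscernibleOver (L := L) (fun i : {q : ℚ // q ≠ 0} => a i.1) {b 0 0}) :
    ∃ (k : ℕ) (ψ : L.Formula ((Fin mx ⊕ Fin 1) ⊕ Fin k)) (c : Fin k → M),
      (∀ l, c l ∈ ⋃ i : {q : ℚ // q ≠ 0}, Set.range (a i.1)) ∧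
        HasOPWithParams ψ c := by
  classical
  unfold IsIndiscernibleOver at hnover
  push_neg at hnover
  obtain ⟨n, m, ii, jj, hii, hjj, p, hp, χ₀, hne⟩ := hnover
  have hmono_i : StrictMono fun k => (ii k).1 := fun k l h => Subtype.coe_lt_coe.mpr (hii h)
  have hmono_j : StrictMono fun k => (jj k).1 := fun k l h => Subtype.coe_lt_coe.mpr (hjj h)
  obtain ⟨χ', hχ'⟩ : ∃ χ' : L.Formula (Fin n × Fin mx ⊕ Fin 1),
      χ' = χ₀.relabel (Sum.map id fun _ : Fin m => (0 : Fin 1)) := ⟨_, rfl⟩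
  have hconv : ∀ t : Fin n → ℚ,
      (PredOP a b χ' t 0 ↔
        χ₀.Realize (Sum.elim (fun v : Fin n × Fin mx => a (t v.1) v.2) p)) := by
    intro t
    unfold PredOP
    rw [hχ', Formula.realize_relabel]
    refine Iff.of_eq (congrArg (fun w : (Fin n × Fin mx ⊕ Fin m) → M =>
      Formula.Realize χ₀ w) ?_)
    funext v
    rcases v with x | l
    · rfl
    · exact (hp l).symm
  have hne2 : ¬ (PredOP a b χ' (fun k => (ii k).1) 0 ↔ PredOP a b χ' (fun k => (jj k).1) 0) := by
    intro h
    have hAB := (hconv _).symm.trans (h.trans (hconv _))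
    rcases hne with ⟨ha, hb⟩ | ⟨ha, hb⟩
    · exact hb (hAB.mp ha)
    · exact ha (hAB.mpr hb)
  obtain ⟨e1, s1, hs1, hpt1, h01⟩ := exists_merge (fun k => (ii k).1) hmono_i (fun k => (ii k).2)
  obtain ⟨e2, s2, hs2, hpt2, h02⟩ := exists_merge (fun k => (jj k).1) hmono_j (fun k => (jj k).2)
  have hQ1 : PredOP a b χ' (fun k => (ii k).1) 0 ↔ PredOP a b χ' (tauT n (e1 : ℕ)) 0 :=
    aux_merge hind χ' e1 s1 (sLin n (e1 : ℕ)) hs1 (sLin_mono n _) _ _ _ _ hpt1 h01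
      (fun k => by simp only [sLin, tauT, skOP_val, OP12.val_mk]
                   split_ifs <;> (push_cast; ring))
      (by simp [sLin])
  have hQ2 : PredOP a b χ' (fun k => (jj k).1) 0 ↔ PredOP a b χ' (tauT n (e2 : ℕ)) 0 :=
    aux_merge hind χ' e2 s2 (sLin n (e2 : ℕ)) hs2 (sLin_mono n _) _ _ _ _ hpt2 h02
      (fun k => by simp only [sLin, tauT, skOP_val, OP12.val_mk]
                   split_ifs <;> (push_cast; ring))
      (by simp [sLin])
  have hne3 : ¬ (PredOP a b χ' (tauT n (e1 : ℕ)) 0 ↔ PredOP a b χ' (tauT n (e2 : ℕ)) 0) :=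
    fun h => hne2 (hQ1.trans (h.trans hQ2.symm))
  have hstep : ∃ d : ℕ, d < n ∧
      ¬ (PredOP a b χ' (tauT n d) 0 ↔ PredOP a b χ' (tauT n (d + 1)) 0) := by
    by_contra hcon
    push_neg at hcon
    have hall : ∀ dd : ℕ, dd ≤ n →
        (PredOP a b χ' (tauT n dd) 0 ↔ PredOP a b χ' (tauT n 0) 0) := by
      intro dd
      induction dd with
      | zero => exact fun _ => Iff.rfl
      | succ k ih => exact fun h => (hcon k (by omega)).symm.trans (ih (by omega))
    have h1 := hall (e1 : ℕ) (by have := e1.isLt; omega)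
    have h2 := hall (e2 : ℕ) (by have := e2.isLt; omega)
    exact hne3 (h1.trans h2.symm)
  obtain ⟨d, hd, hdQ⟩ := hstep
  refine ⟨n * mx, χ'.relabel (rpsiOP n mx d), cparOP a n d, ?_, ?_⟩
  · intro l
    rw [Set.mem_iUnion]
    refine ⟨⟨sigT n d 37 (finProdFinEquiv.symm l).1, ?_⟩, (finProdFinEquiv.symm l).2, rfl⟩
    simp only [sigT]
    split_ifs with h1 h2
    · have hn1 : (((finProdFinEquiv.symm l).1 : ℕ) : ℚ) + 1 ≤ (d : ℚ) := by
        have : ((finProdFinEquiv.symm l).1 : ℕ) + 1 ≤ d := h1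
        exact_mod_cast this
      intro he; linarith
    · norm_num
    · have hn1 : (d : ℚ) + 1 ≤ (((finProdFinEquiv.symm l).1 : ℕ) : ℚ) := by
        have : d + 1 ≤ ((finProdFinEquiv.symm l).1 : ℕ) := by omega
        exact_mod_cast this
      intro he; linarith
  · by_cases hQtop : PredOP a b χ' (tauT n (d + 1)) 0
    · have hQbot : ¬ PredOP a b χ' (tauT n d) 0 := fun h => hdQ (iff_of_true h hQtop)
      refine ⟨⟨M, ElementaryEmbedding.refl L M⟩,
        (fun i => a (-(1 / (2 * (i : ℚ) + 2)))),
        (fun j _ => b (-(1 / (2 * (j : ℚ) + 1))) 0), ?_⟩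
      intro i j
      have hre := realize_psi (L := L) (M := M) (b := b) χ' d (-(1 / (2 * (i : ℚ) + 2)))
        (-(1 / (2 * (j : ℚ) + 1))) (cparOP a n d) rfl
      have hgoal : PredOP a b χ' (sigT n d (-(1 / (2 * (i : ℚ) + 2))))
          (-(1 / (2 * (j : ℚ) + 1))) ↔ i < j := by
        by_cases hij : i < j
        · rw [predA hind χ' d hd _ _ (by have := frac_lt2 i; linarith)
            (by have := frac_ij hij; linarith) (by have := frac_pos' j; linarith)]
          exact iff_of_true hQtop hij
        · rw [predB hind χ' d hd _ _ (by have := frac_lt2' j; linarith)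
            (by have := frac_ji (by omega : j ≤ i); linarith) (by have := frac_pos i; linarith)]
          exact iff_of_false hQbot hij
      exact hre.trans hgoal
    · have hQbot : PredOP a b χ' (tauT n d) 0 := by
        by_contra h0
        exact hdQ (iff_of_false h0 hQtop)
      refine ⟨⟨M, ElementaryEmbedding.refl L M⟩,
        (fun i => a (1 / (2 * (i : ℚ) + 2))),
        (fun j _ => b (1 / (2 * (j : ℚ) + 1)) 0), ?_⟩
      intro i j
      have hre := realize_psi (L := L) (M := M) (b := b) χ' d (1 / (2 * (i : ℚ) + 2))
        (1 / (2 * (j : ℚ) + 1)) (cparOP a n d) rfl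
      have hgoal : PredOP a b χ' (sigT n d (1 / (2 * (i : ℚ) + 2)))
          (1 / (2 * (j : ℚ) + 1)) ↔ i < j := by
        by_cases hij : i < j
        · rw [predB hind χ' d hd _ _ (by have := frac_pos' j; linarith)
            (frac_ij hij) (frac_lt2 i)]
          exact iff_of_true hQbot hij
        · rw [predA hind χ' d hd _ _ (by have := frac_pos i; linarith)
            (frac_ji (by omega : j ≤ i)) (frac_lt2' j)]
          exact iff_of_false hQtop hij
      exact hre.trans hgoal
end

section
/- Let T be a complete first-order theory, φ(x̄;ȳ) a formula with |ȳ| ≥ 2, and let (āᵢ : i ∈ ℚ) and (b̄ⱼ : j ∈ ℚ) be tuples in a model M of T forming an L*-indiscernible family indexed by the random ordered bipartite graph G*, such that M ⊨ φ(āᵢ; b̄ⱼ) iff R*(i,j). Write b̄ᵢ = bᵢ⁰⌢b̄'ᵢ where bᵢ⁰ is a single element. If the sequences (āᵢ : i ∈ ℚ) and (bᵢ⁰ : i ∈ ℚ) are mutually indiscernible, then the formula ψ(x̄;ȳ') := φ(x̄; b₀⁰, ȳ') (with parameter b₀⁰ and |ȳ'| = |ȳ| − 1) has the independence property: for every X ⊆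 ℚ there is a tuple b̄_X in an elementary extension of M with φ(āᵢ; b₀⁰, b̄_X) iff i ∈ X. -/
open FirstOrder FirstOrder.Language

universe u v

section Aux

open Filter

theorem strictMono_fin_one {α : Type*} [Preorder α] (f : Fin 1 → α) : StrictMono f :=
  fun k l h => absurd (Subsingleton.elim k l) (ne_of_lt h)

/-- Finite conjunction of a list of formulas. -/
def conjList {L : FirstOrder.Language.{u, v}} {α : Type*} : List (L.Formula α) → L.Formula α
  | [] => ⊤
  | ψ :: l => ψ ⊓ conjList l

theorem realize_conjList {L : FirstOrder.Language.{u, v}} {M : Type (max u v)}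
    [L.Structure M] {α : Type*} (l : List (L.Formula α)) (v : α → M) :
    (conjList l).Realize v ↔ ∀ ψ ∈ l, ψ.Realize v := by
  induction l with
  | nil => simp [conjList]
  | cons ψ l ih =>
    simp only [conjList, Formula.realize_inf, ih, List.mem_cons]
    constructor
    · rintro ⟨h1, h2⟩ χ (rfl | hχ)
      · exact h1
      · exact h2 _ hχ
    · intro h
      exact ⟨h _ (Or.inl rfl), fun χ hχ => h _ (Or.inr hχ)⟩

/-- The variable relabeling used to build the auxiliary formula `ψ`. -/
def gMap {mx ny n : ℕ} (k : Fin n) :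
    (Fin mx ⊕ Fin (ny + 1)) → ((Fin 1 × Fin 1 ⊕ Fin (n * mx)) ⊕ Fin ny) :=
  Sum.elim (fun x => Sum.inl (Sum.inr (finProdFinEquiv (k, x))))
    (Fin.cases (Sum.inl (Sum.inl (0, 0))) fun y => Sum.inr y)

/-- The `k`-th signed conjunct. -/
noncomputable def sgnF {L : FirstOrder.Language.{u, v}} {mx ny n : ℕ}
    (φ : L.Formula (Fin mx ⊕ Fin (ny + 1))) (t : Fin n → Prop) [DecidablePred t] (k : Fin n) :
    L.Formula ((Fin 1 × Fin 1 ⊕ Fin (n * mx)) ⊕ Fin ny) :=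
  if t k then φ.relabel (gMap k) else (φ.relabel (gMap k)).not

/-- The auxiliary formula `∃ ȳ', ⋀ₖ φ(x̄ₖ; y⁰, ȳ')^{t k}`. -/
noncomputable def psiF {L : FirstOrder.Language.{u, v}} {mx ny n : ℕ}
    (φ : L.Formula (Fin mx ⊕ Fin (ny + 1))) (t : Fin n → Prop) [DecidablePred t] :
    L.Formula (Fin 1 × Fin 1 ⊕ Fin (n * mx)) :=
  Formula.iExs (Fin ny) (conjList ((List.finRange n).map (sgnF φ t)))

theorem gMap_comp {M : Type*}
    {mx ny n : ℕ} (k : Fin n) (b0 : M) (p : Fin (n * mx) → M) (w : Fin ny → M) :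
    ((Sum.elim (Sum.elim (fun _ : Fin 1 × Fin 1 => b0) p) w) ∘ (gMap (mx := mx) (ny := ny) k))
      = Sum.elim (fun x => p (finProdFinEquiv (k, x))) (Fin.cases b0 w) := by
  funext z
  rcases z with x | y
  · rfl
  · induction y using Fin.cases <;> simp [gMap, Function.comp]

theorem realize_psiF {L : FirstOrder.Language.{u, v}} {M : Type (max u v)} [L.Structure M]
    {mx ny n : ℕ} (φ : L.Formula (Fin mx ⊕ Fin (ny + 1))) (t : Fin n → Prop) [DecidablePred t]
    (b0 : M) (p : Fin (n * mx) → M) :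
    (psiF φ t).Realize (Sum.elim (fun _ : Fin 1 × Fin 1 => b0) p) ↔
      ∃ w : Fin ny → M, ∀ k : Fin n,
        (φ.Realize (Sum.elim (fun x => p (finProdFinEquiv (k, x))) (Fin.cases b0 w)) ↔ t k) := by
  rw [psiF, Formula.realize_iExs]
  refine exists_congr fun w => ?_
  have hv : (fun z => Sum.elim (Sum.elim (fun _ : Fin 1 × Fin 1 => b0) p) w (id z))
      = Sum.elim (Sum.elim (fun _ : Fin 1 × Fin 1 => b0) p) w := rfl
  rw [realize_conjList]
  have hmem : ∀ χ, (χ ∈ (List.finRange n).map (sgnF φ t)) ↔ ∃ k : Fin n, sgnF φ t k = χ := by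
    intro χ
    simp [List.mem_map]
  constructor
  · intro h k
    have hk := h _ ((hmem _).2 ⟨k, rfl⟩)
    by_cases ht : t k
    · unfold sgnF at hk
      rw [if_pos ht, Formula.realize_relabel, gMap_comp] at hk
      exact iff_of_true hk ht
    · unfold sgnF at hk
      rw [if_neg ht, Formula.realize_not, Formula.realize_relabel, gMap_comp] at hk
      exact iff_of_false hk ht
  · intro h χ hχ
    obtain ⟨k, rfl⟩ := (hmem _).1 hχ
    by_cases ht : t k
    · unfold sgnF
      rw [if_pos ht, Formula.realize_relabel, gMap_comp]
      exact (h k).2 ht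
    · unfold sgnF
      rw [if_neg ht, Formula.realize_not, Formula.realize_relabel, gMap_comp]
      exact fun hr => ht ((h k).1 hr)

/-- Finite satisfiability: for every `X ⊆ ℚ` and finite `F ⊆ ℚ` there is a tuple `c` in `M`
with `φ(āᵢ; b₀⁰, c)` iff `i ∈ X`, for all `i ∈ F`. -/
theorem finite_sat {L : FirstOrder.Language.{u, v}} {M : Type (max u v)} [L.Structure M]
    {mx ny : ℕ} (φ : L.Formula (Fin mx ⊕ Fin (ny + 1)))
    (a : ℚ → Fin mx → M) (b : ℚ → Fin (ny + 1) → M)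
    (R : ℚ → ℚ → Prop) (hR : IsRandomOBG R)
    (hedge : ∀ i j : ℚ, φ.Realize (Sum.elim (a i) (b j)) ↔ R i j)
    (hmut : MutuallyIndiscernible (L := L) a (fun i (_ : Fin 1) => b i 0))
    (X : Set ℚ) (F : Finset ℚ) :
    ∃ c : Fin ny → M, ∀ i ∈ F,
      (φ.Realize (Sum.elim (a i) (Fin.cases (b 0 0) c)) ↔ i ∈ X) := by
  classical
  -- find a `V`-vertex `j` connected exactly to the elements of `F ∩ X` within `F`
  obtain ⟨j, hj⟩ : ∃ j : ℚ, ∀ i ∈ F, (R i j ↔ i ∈ X) := by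
    have hd : Disjoint (F.filter (· ∈ X)) (F.filter (fun x => ¬ (x ∈ X))) :=
      Finset.disjoint_filter_filter_not F F (· ∈ X)
    obtain ⟨j, hjS, -⟩ := (hR.2.2.2.2.2 _ _ hd).2.2 0
    refine ⟨j, fun i hi => ?_⟩
    by_cases hx : i ∈ X
    · exact iff_of_true (hjS.1 i (Finset.mem_filter.2 ⟨hi, hx⟩)) hx
    · exact iff_of_false (hjS.2 i (Finset.mem_filter.2 ⟨hi, hx⟩)) hx
  set e : Fin F.card ≃o {x // x ∈ F} := F.orderIsoOfFin rfl with he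
  set p : Fin (F.card * mx) → M :=
    (fun w => a (e (finProdFinEquiv.symm w).1) (finProdFinEquiv.symm w).2) with hp
  set t : Fin F.card → Prop := (fun k => (e k : ℚ) ∈ X) with ht
  have hpk : ∀ k : Fin F.card, (fun x => p (finProdFinEquiv (k, x))) = a (e k) := by
    intro k
    funext x
    rw [hp]
    simp
  have key : (psiF φ t).Realize (Sum.elim (fun _ : Fin 1 × Fin 1 => b j 0) p) ↔
      (psiF φ t).Realize (Sum.elim (fun _ : Fin 1 × Fin 1 => b 0 0) p) :=
    hmut.2 1 (F.card * mx) (fun _ => j) (fun _ => 0)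
      (strictMono_fin_one _) (strictMono_fin_one _) p
      (fun w => Set.mem_iUnion.2 ⟨_, ⟨_, rfl⟩⟩) (psiF φ t)
  have hleft : (psiF φ t).Realize (Sum.elim (fun _ : Fin 1 × Fin 1 => b j 0) p) := by
    rw [realize_psiF]
    refine ⟨fun y => b j y.succ, fun k => ?_⟩
    have hbj : (Fin.cases (b j 0) (fun y => b j y.succ) : Fin (ny + 1) → M) = b j := by
      funext y
      induction y using Fin.cases <;> simp
    rw [hpk k, hbj, hedge]
    exact hj _ (e k).2
  obtain ⟨c, hc⟩ := (realize_psiF φ t (b 0 0) p).1 (key.1 hleft)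
  refine ⟨c, fun i hi => ?_⟩
  have hek : (e (e.symm ⟨i, hi⟩) : ℚ) = i := by rw [OrderIso.apply_symm_apply]
  have := hc (e.symm ⟨i, hi⟩)
  rw [hpk] at this
  simp only [ht] at this
  rw [hek] at this
  exact this

end Aux

/-- Let `(āᵢ, b̄ᵢ : i ∈ ℚ)` be `L*`-indiscernible, indexed by the random ordered
bipartite graph `G*` (edge relation `R`), with `φ(āᵢ; b̄ⱼ)` iff `R i j`, and write
`b̄ᵢ = bᵢ⁰ ⌢ b̄'ᵢ`. If `(āᵢ)` and `(bᵢ⁰)` are mutually indiscernible, then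
`ψ(x̄; ȳ') := φ(x̄; b₀⁰, ȳ')` has the independence property: for every `X ⊆ ℚ` there is a
tuple `b̄_X` in an elementary extension of `M` with `φ(āᵢ; b₀⁰, b̄_X)` iff `i ∈ X`. -/
theorem independence_property_of_mutually_indiscernible_first_coordinate
    {L : FirstOrder.Language.{u, v}} (T : L.Theory) (hT : T.IsComplete)
    (M : Type (max u v)) [L.Structure M] [Nonempty M] (hM : M ⊨ T)
    {mx ny : ℕ} (φ : L.Formula (Fin mx ⊕ Fin (ny + 1)))
    (a : ℚ → Fin mx → M) (b : ℚ → Fin (ny + 1) → M)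
    (R : ℚ → ℚ → Prop) (hR : IsRandomOBG R)
    (hind : IsLStarIndiscernible (L := L) R a b)
    (hedge : ∀ i j : ℚ, φ.Realize (Sum.elim (a i) (b j)) ↔ R i j)
    (hmut : MutuallyIndiscernible (L := L) a (fun i (_ : Fin 1) => b i 0)) :
    HasIPWithParams (φ.relabel (splitVar mx ny)) (fun _ : Fin 1 => b 0 0) ∧
      ∃ N : ElemExt L M, ∀ X : Set ℚ, ∃ bX : Fin ny → N.carrier,
        ∀ i : ℚ,
          (φ.Realize (Sum.elim (fun x => N.emb (a i x)) (Fin.cases (N.emb (b 0 0)) bX)) ↔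
            i ∈ X) := by
  classical
  have hfin := finite_sat φ a b R hR hedge hmut
  choose cc hcc using hfin
  let u : Ultrafilter (Finset ℚ) := Ultrafilter.of Filter.atTop
  have hu : (u : Filter (Finset ℚ)) ≤ Filter.atTop := Ultrafilter.of_le _
  let NC := (u : Filter (Finset ℚ)).Product (fun _ => M)
  let emb : M ↪ₑ[L] NC :=
    { toFun := fun x => (↑(fun _ : Finset ℚ => x) : NC)
      map_formula' := fun n ψ x => by
        have h1 : (ψ.Realize fun i => ((fun _ : Finset ℚ => x i) : NC)) ↔
            ∀ᶠ _F in (u : Filter (Finset ℚ)), ψ.Realize x :=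
          Ultraproduct.realize_formula_cast ψ (fun i _ => x i)
        exact h1.trans Filter.eventually_const }
  have main : ∀ X : Set ℚ, ∃ bX : Fin ny → NC, ∀ i : ℚ,
      (φ.Realize (Sum.elim (fun x => emb (a i x)) (Fin.cases (emb (b 0 0)) bX)) ↔ i ∈ X) := by
    intro X
    refine ⟨fun k => (↑(fun F => cc X F k) : NC), fun i => ?_⟩
    have hlos := Ultraproduct.realize_formula_cast (u := u) φ
      (Sum.elim (fun x (_ : Finset ℚ) => a i x)
        (Fin.cases (fun _ => b 0 0) (fun y F => cc X F y)))
    have heq1 : (Sum.elim (fun x => emb (a i x))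
        (Fin.cases (emb (b 0 0)) (fun k => (↑(fun F => cc X F k) : NC))) :
          (Fin mx ⊕ Fin (ny + 1)) → NC)
        = fun z => (↑(Sum.elim (fun x (_ : Finset ℚ) => a i x)
            (Fin.cases (fun _ => b 0 0) (fun y F => cc X F y)) z) : NC) := by
      funext z
      rcases z with x | y
      · rfl
      · induction y using Fin.cases <;>
          simp only [Sum.elim_inr, Fin.cases_zero, Fin.cases_succ] <;> try rfl
    have heq2 : ∀ F : Finset ℚ,
        (fun z => Sum.elim (fun x (_ : Finset ℚ) => a i x)
          (Fin.cases (fun _ => b 0 0) (fun y F => cc X F y)) z F)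
        = Sum.elim (a i) (Fin.cases (b 0 0) (cc X F)) := by
      intro F
      funext z
      rcases z with x | y
      · rfl
      · induction y using Fin.cases <;> simp
    rw [heq1]
    refine hlos.trans ?_
    have h1 : {F : Finset ℚ | i ∈ F} ∈ (u : Filter (Finset ℚ)) :=
      Filter.le_def.1 hu _ (Filter.mem_of_superset (Filter.mem_atTop ({i} : Finset ℚ))
        (fun F hF => Finset.singleton_subset_iff.1 hF))
    have hbig : ∀ᶠ F in (u : Filter (Finset ℚ)),
        ((φ.Realize (fun z => Sum.elim (fun x (_ : Finset ℚ) => a i x)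
          (Fin.cases (fun _ => b 0 0) (fun y F => cc X F y)) z F)) ↔ i ∈ X) := by
      rw [Filter.eventually_iff]
      refine Filter.mem_of_superset h1 fun F hF => ?_
      simp only [Set.mem_setOf_eq] at hF ⊢
      rw [heq2 F]
      exact hcc X F i hF
    constructor
    · intro h
      obtain ⟨F, h1', h2'⟩ := (h.and hbig).exists
      exact h2'.1 h1'
    · intro hX
      exact hbig.mono fun F hF => hF.2 hX
  refine ⟨?_, ⟨⟨NC, emb⟩, main⟩⟩
  choose bX hbX using main
  refine ⟨⟨NC, emb⟩, fun n x => emb (a (n : ℚ) x),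
    fun S => bX ((fun n : ℕ => (n : ℚ)) '' S), fun i S => ?_⟩
  rw [Formula.realize_relabel]
  have hveq : ((Sum.elim (Sum.elim (fun x => emb (a (i : ℚ) x))
        (bX ((fun n : ℕ => (n : ℚ)) '' S))) (emb ∘ (fun _ : Fin 1 => b 0 0))) ∘ splitVar mx ny)
      = Sum.elim (fun x => emb (a (i : ℚ) x))
        (Fin.cases (emb (b 0 0)) (bX ((fun n : ℕ => (n : ℚ)) '' S))) := by
    funext z
    rcases z with x | y
    · rfl
    · induction y using Fin.cases <;> simp [splitVar, Function.comp]
  rw [hveq, hbX]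
  constructor
  · rintro ⟨n, hn, hcast⟩
    rwa [← Nat.cast_injective hcast]
  · intro hi
    exact ⟨i, hi, rfl⟩
end
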